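/- arXiv:1104.0627 — 4 statements merged into one kernel-verified Lean document; each statement's English description precedes it below -/
import Mathlib

section
/- Let A be an Artin algebra and X a finitely generated right A-module which is Ext-projective in gen(X), and set a = ann_A(X). Then there exists a short exact sequence 0 → A/a → X⁰ → X¹ → 0 of right A/a-modules such that X⁰ is a direct summand of X^(d) for some d ≥ 0, X¹ admits a surjective homomorphism from X^(n) for some n ≥ 0, and Ext¹_{A/a}(X¹, N) = 0 for every right A/a-module N admitting a surjective homomorphism from some X^(m). -/
open CategoryTheory

section Prelim

variable (A : Type) [Ring A]

/-- `M` lies in `gen(X)`: some finite direct sum of copies of `X` surjects onto `M`. -/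
def IsGenBy (X M : Type) [AddCommGroup X] [Module A X] [AddCommGroup M] [Module A M] : Prop :=
  ∃ (n : ℕ) (f : (Fin n → X) →ₗ[A] M), Function.Surjective f

/-- `M` lies in `cog(Y)`: `M` embeds into some finite direct sum of copies of `Y`. -/
def IsCogBy (Y M : Type) [AddCommGroup Y] [Module A Y] [AddCommGroup M] [Module A M] : Prop :=
  ∃ (n : ℕ) (f : M →ₗ[A] (Fin n → Y)), Function.Injective f

/-- `M` is a direct summand of a finite direct sum of copies of `X`. -/
def IsDirectSummandOf (X M : Type) [AddCommGroup X] [Module A X] [AddCommGroup M]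
    [Module A M] : Prop :=
  ∃ (n : ℕ) (i : M →ₗ[A] (Fin n → X)) (r : (Fin n → X) →ₗ[A] M), r ∘ₗ i = LinearMap.id

/-- `Ext¹_A(M, N)`. -/
noncomputable abbrev ext1 (M N : Type) [AddCommGroup M] [Module A M]
    [AddCommGroup N] [Module A N] : ModuleCat ℤ :=
  ((Ext ℤ (ModuleCat A) 1).obj (Opposite.op (ModuleCat.of A M))).obj (ModuleCat.of A N)

/-- The ring congruence on `A` identifying `a` and `b` iff `a - b` annihilates `X`. -/
def annRingCon (X : Type) [AddCommGroup X] [Module A X] : RingCon A where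
  r a b := ∀ x : X, a • x = b • x
  iseqv := ⟨fun _ _ => rfl, fun h x => (h x).symm, fun h1 h2 x => (h1 x).trans (h2 x)⟩
  mul' := @fun a b c d h1 h2 x => by
    show (a * c) • x = (b * d) • x
    rw [mul_smul, mul_smul, h2, h1]
  add' := @fun a b c d h1 h2 x => by
    show (a + c) • x = (b + d) • x
    rw [add_smul, add_smul, h1 x, h2 x]

/-- The factor algebra `A/ann_A(X)`. -/
abbrev AnnQuot (X : Type) [AddCommGroup X] [Module A X] : Type := (annRingCon A X).Quotient

instance (X : Type) [AddCommGroup X] [Module A X] : SMul (AnnQuot A X) X :=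
  ⟨fun c x => Quotient.liftOn' c (fun a => a • x) (fun _ _ h => h x)⟩

/-- `X` is a module over `A/ann_A(X)`. -/
instance (X : Type) [AddCommGroup X] [Module A X] : Module (AnnQuot A X) X where
  one_smul x := one_smul A x
  mul_smul c d x := Quotient.inductionOn₂' c d fun a b => mul_smul a b x
  smul_zero c := Quotient.inductionOn' c fun a => smul_zero a
  smul_add c x y := Quotient.inductionOn' c fun a => smul_add a x y
  add_smul c d x := Quotient.inductionOn₂' c d fun a b => add_smul a b x
  zero_smul x := zero_smul A x

end Prelim


section ExtAux
open CategoryTheory Limits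


variable {B : Type} [Ring B]

lemma my_subsingleton_of_isZero {P : ModuleCat ℤ} (h : IsZero P) : Subsingleton P := by
  rw [IsZero.iff_id_eq_zero] at h
  refine ⟨fun a b => ?_⟩
  calc a = 𝟙 P a := rfl
  _ = (0 : P ⟶ P) a := by rw [h]
  _ = (0 : P ⟶ P) b := rfl
  _ = 𝟙 P b := by rw [h]
  _ = b := rfl


/-- Re-type a morphism of module categories as a linear map. -/
def toLin {P Q : ModuleCat B} (f : P ⟶ Q) : P →ₗ[B] Q := f.hom

/-- Re-type a morphism into `ModuleCat.of B N` as a linear map into `N`. -/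
def homToLin {P : ModuleCat B} {N : Type} [AddCommGroup N] [Module B N]
    (f : P ⟶ ModuleCat.of B N) : P →ₗ[B] N := f.hom

lemma my_hom_apply {P Q : ModuleCat B} {f g : P ⟶ Q} (h : f = g) (x : P) : f x = g x := by rw [h]

lemma my_ofInjective_symm_apply {M N' : Type} [AddCommGroup M] [Module B M]
    [AddCommGroup N'] [Module B N']
    (i : M →ₗ[B] N') (hi : Function.Injective i) (w : LinearMap.range i) :
    i ((LinearEquiv.ofInjective i hi).symm w) = w := by
  conv_rhs => rw [← (LinearEquiv.ofInjective i hi).apply_symm_apply w]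
  rw [LinearEquiv.ofInjective_apply]

lemma ext1_aux (M N : Type) [AddCommGroup M] [Module B M] [AddCommGroup N] [Module B N]
    (P : ProjectiveResolution (ModuleCat.of B M)) :
    Subsingleton (ext1 B M N) ↔
      ∀ (φ : P.complex.X 1 ⟶ ModuleCat.of B N), P.complex.d 2 1 ≫ φ = 0 →
        ∃ ψ : P.complex.X 0 ⟶ ModuleCat.of B N, P.complex.d 1 0 ≫ ψ = φ := by
  have h1 : Subsingleton (ext1 B M N) ↔
      IsZero ((P.complex.linearYonedaObj ℤ (ModuleCat.of B N)).homology 1) := by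
    constructor
    · intro h
      exact (Iso.isZero_iff (P.isoExt 1 (ModuleCat.of B N))).1
        (@ModuleCat.isZero_of_subsingleton _ _ _ h)
    · intro h
      exact my_subsingleton_of_isZero ((Iso.isZero_iff (P.isoExt 1 (ModuleCat.of B N))).2 h)
  rw [h1, ← HomologicalComplex.exactAt_iff_isZero_homology,
    HomologicalComplex.exactAt_iff' _ 0 1 2 (by simp) (by simp),
    ShortComplex.moduleCat_exact_iff]
  exact Iff.rfl

/-- Every extension `0 → N → E → M → 0` of `B`-modules splits. -/
def ExtensionsSplit (B : Type) [Ring B] (M N : Type) [AddCommGroup M] [Module B M]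
    [AddCommGroup N] [Module B N] : Prop :=
  ∀ (E : Type) [AddCommGroup E] [Module B E], ∀ (i : N →ₗ[B] E) (p : E →ₗ[B] M),
    Function.Injective i → Function.Exact i p → Function.Surjective p →
    ∃ s : M →ₗ[B] E, p ∘ₗ s = LinearMap.id

lemma extensionsSplit_of_subsingleton_ext1 (M N : Type) [AddCommGroup M] [Module B M]
    [AddCommGroup N] [Module B N] (h : Subsingleton (ext1 B M N)) :
    ExtensionsSplit B M N := by
  intro E _ _ i p hi hex hp
  obtain ⟨P⟩ := HasProjectiveResolution.out (Z := ModuleCat.of B M)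
  have hπs : Function.Surjective (P.π.f 0) := by
    rw [← ModuleCat.epi_iff_surjective]; infer_instance
  have hexact0 : ∀ v : P.complex.X 0, P.π.f 0 v = 0 → ∃ x, P.complex.d 1 0 x = v := fun v hv =>
    (ShortComplex.moduleCat_exact_iff _).1
      ((ShortComplex.mk (P.complex.d 1 0) (P.π.f 0)
        P.complex_d_comp_π_f_zero).exact_of_g_is_cokernel P.isColimitCokernelCofork) v hv
  haveI : Epi (ModuleCat.ofHom p : ModuleCat.of B E ⟶ ModuleCat.of B M) := (ModuleCat.epi_iff_surjective _).2 hp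
  set τ : P.complex.X 0 ⟶ ModuleCat.of B E :=
    @Projective.factorThru _ _ _ _ _ _ (P.π.f 0) (ModuleCat.ofHom p) this with hτdef
  have hτ : ∀ v, p (τ v) = P.π.f 0 v := fun v =>
    my_hom_apply (@Projective.factorThru_comp _ _ _ _ _ _ (P.π.f 0) (ModuleCat.ofHom p) this) v
  have hmem : ∀ x : P.complex.X 1, τ (P.complex.d 1 0 x) ∈ LinearMap.range i := by
    intro x
    refine LinearMap.mem_range.2 ((hex _).1 ?_)
    rw [hτ]
    exact my_hom_apply P.complex_d_comp_π_f_zero x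
  set φ : P.complex.X 1 →ₗ[B] N :=
    (LinearEquiv.ofInjective i hi).symm.toLinearMap ∘ₗ
      LinearMap.codRestrict (LinearMap.range i)
        (homToLin τ ∘ₗ toLin (P.complex.d 1 0)) hmem with hφdef
  have hφ : ∀ x, i (φ x) = τ (P.complex.d 1 0 x) := fun x =>
    my_ofInjective_symm_apply i hi ⟨_, hmem x⟩
  have hφc : P.complex.d 2 1 ≫ ModuleCat.ofHom φ = 0 := by
    refine ModuleCat.hom_ext (LinearMap.ext fun w => ?_)
    show φ (P.complex.d 2 1 w) = 0
    apply hi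
    rw [hφ, map_zero]
    have h2 : P.complex.d 1 0 (P.complex.d 2 1 w) = 0 := my_hom_apply (P.complex.d_comp_d 2 1 0) w
    rw [h2]
    exact map_zero _
  obtain ⟨ψ, hψ⟩ := (ext1_aux M N P).1 h (ModuleCat.ofHom φ) hφc
  set σ : P.complex.X 0 →ₗ[B] E := homToLin τ - (i ∘ₗ homToLin ψ) with hσdef
  have hσd : ∀ x, σ (P.complex.d 1 0 x) = 0 := by
    intro x
    have h1 : ψ (P.complex.d 1 0 x) = φ x := my_hom_apply hψ x
    show homToLin τ (P.complex.d 1 0 x) - i (homToLin ψ (P.complex.d 1 0 x)) = 0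
    rw [show homToLin ψ (P.complex.d 1 0 x) = φ x from h1, hφ]
    exact sub_self _
  have hpσ : ∀ v, p (σ v) = P.π.f 0 v := by
    intro v
    show p (homToLin τ v - i (homToLin ψ v)) = _
    rw [map_sub, (hex _).2 ⟨homToLin ψ v, rfl⟩, sub_zero]
    exact hτ v
  have hker : LinearMap.ker (homToLin (P.π.f 0)) ≤ LinearMap.ker σ := by
    intro v hv
    obtain ⟨x, rfl⟩ := hexact0 v hv
    exact hσd x
  set eq := LinearMap.quotKerEquivOfSurjective (homToLin (P.π.f 0)) hπs with heq
  set s : M →ₗ[B] E :=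
    (Submodule.liftQ (LinearMap.ker (homToLin (P.π.f 0))) σ hker) ∘ₗ
      eq.symm.toLinearMap with hsdef
  have hs : ∀ v, s (P.π.f 0 v) = σ v := by
    intro v
    have h2 : eq (Submodule.Quotient.mk v) = P.π.f 0 v := by
      simp [heq, LinearMap.quotKerEquivOfSurjective]; rfl
    have h3 : eq.symm (P.π.f 0 v) = Submodule.Quotient.mk v := by
      rw [← h2, LinearEquiv.symm_apply_apply]
    show Submodule.liftQ _ σ hker (eq.symm (P.π.f 0 v)) = σ v
    rw [h3, Submodule.liftQ_apply]
  refine ⟨s, LinearMap.ext fun m => ?_⟩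
  obtain ⟨v, rfl⟩ := hπs m
  show p (s (P.π.f 0 v)) = P.π.f 0 v
  rw [hs, hpσ]

lemma subsingleton_ext1_of_extensionsSplit (M N : Type) [AddCommGroup M] [Module B M]
    [AddCommGroup N] [Module B N] (h : ExtensionsSplit B M N) :
    Subsingleton (ext1 B M N) := by
  obtain ⟨P⟩ := HasProjectiveResolution.out (Z := ModuleCat.of B M)
  have hπs : Function.Surjective (P.π.f 0) := by
    rw [← ModuleCat.epi_iff_surjective]; infer_instance
  have hexact0 : ∀ v : P.complex.X 0, P.π.f 0 v = 0 → ∃ x, P.complex.d 1 0 x = v := fun v hv =>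
    (ShortComplex.moduleCat_exact_iff _).1
      ((ShortComplex.mk (P.complex.d 1 0) (P.π.f 0)
        P.complex_d_comp_π_f_zero).exact_of_g_is_cokernel P.isColimitCokernelCofork) v hv
  have hexact1 : ∀ x : P.complex.X 1, P.complex.d 1 0 x = 0 → ∃ w, P.complex.d 2 1 w = x :=
    fun x hx => (ShortComplex.moduleCat_exact_iff _).1 (P.exact_succ 0) x hx
  rw [ext1_aux M N P]
  intro φ hφ
  have hπd : ∀ x, P.π.f 0 (P.complex.d 1 0 x) = 0 := fun x =>
    my_hom_apply P.complex_d_comp_π_f_zero x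
  set j : P.complex.X 1 →ₗ[B] (P.complex.X 0 × N) :=
    LinearMap.prod (toLin (P.complex.d 1 0)) (-(homToLin φ)) with hjdef
  set W := LinearMap.range j with hWdef
  set E := (P.complex.X 0 × N) ⧸ W with hEdef
  set iE : N →ₗ[B] E := W.mkQ ∘ₗ LinearMap.inr B _ N with hiEdef
  set pE : E →ₗ[B] M := Submodule.liftQ W
    (homToLin (P.π.f 0) ∘ₗ LinearMap.fst B _ N) (by
      rintro w hw
      obtain ⟨x, rfl⟩ := hw
      show P.π.f 0 (P.complex.d 1 0 x) = 0
      exact hπd x) with hpEdef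
  have hiEm : ∀ n : N, iE n = W.mkQ (0, n) := fun n => rfl
  have hpEm : ∀ w : P.complex.X 0 × N, pE (W.mkQ w) = P.π.f 0 w.1 := fun w => rfl
  have hiEinj : Function.Injective iE := by
    rw [← LinearMap.ker_eq_bot, LinearMap.ker_eq_bot']
    intro n hn
    rw [hiEm, Submodule.mkQ_apply, Submodule.Quotient.mk_eq_zero] at hn
    obtain ⟨x, hx⟩ := hn
    have hx1 : P.complex.d 1 0 x = 0 := congrArg Prod.fst hx
    have hx2 : -(homToLin φ x) = n := congrArg Prod.snd hx
    obtain ⟨w, rfl⟩ := hexact1 x hx1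
    have h3 : homToLin φ (P.complex.d 2 1 w) = 0 := my_hom_apply hφ w
    rw [← hx2, h3, neg_zero]
  have hpEsurj : Function.Surjective pE := by
    intro m
    obtain ⟨v, hv⟩ := hπs m
    exact ⟨W.mkQ (v, 0), by rw [hpEm]; exact hv⟩
  have hexE : Function.Exact iE pE := by
    intro yq
    constructor
    · intro hy
      obtain ⟨⟨v, n⟩, rfl⟩ := W.mkQ_surjective yq
      rw [hpEm] at hy
      obtain ⟨x, hx⟩ := hexact0 v hy
      refine ⟨n + homToLin φ x, ?_⟩
      rw [hiEm, ← sub_eq_zero, ← map_sub, Submodule.mkQ_apply, Submodule.Quotient.mk_eq_zero]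
      refine ⟨-x, ?_⟩
      show (P.complex.d 1 0 (-x), -(homToLin φ (-x))) = (0, n + homToLin φ x) - (v, n)
      rw [map_neg, map_neg, neg_neg, hx, Prod.mk_sub_mk]
      exact Prod.ext_iff.2 ⟨by simp, by simp⟩
    · rintro ⟨n, rfl⟩
      rw [hiEm, hpEm]
      exact map_zero _
  obtain ⟨s, hs⟩ := h E iE pE hiEinj hexE hpEsurj
  set ρ : P.complex.X 0 →ₗ[B] E :=
    W.mkQ ∘ₗ LinearMap.inl B _ N - s ∘ₗ homToLin (P.π.f 0) with hρdef
  have hρm : ∀ v, ρ v = W.mkQ (v, 0) - s (P.π.f 0 v) := fun v => rfl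
  have hρ : ∀ v, ρ v ∈ LinearMap.range iE := by
    intro v
    refine LinearMap.mem_range.2 ((hexE _).1 ?_)
    rw [hρm, map_sub, hpEm]
    have : pE (s (P.π.f 0 v)) = P.π.f 0 v := LinearMap.congr_fun hs (P.π.f 0 v)
    rw [this]; exact sub_self _
  set ψ : P.complex.X 0 →ₗ[B] N :=
    (LinearEquiv.ofInjective iE hiEinj).symm.toLinearMap ∘ₗ
      LinearMap.codRestrict (LinearMap.range iE) ρ hρ with hψdef
  have hψ : ∀ v, iE (ψ v) = ρ v := fun v =>
    my_ofInjective_symm_apply iE hiEinj ⟨_, hρ v⟩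
  refine ⟨ModuleCat.ofHom ψ, ModuleCat.hom_ext (LinearMap.ext fun x => ?_)⟩
  show ψ (P.complex.d 1 0 x) = homToLin φ x
  apply hiEinj
  rw [hψ, hρm, hπd]; erw [map_zero]; rw [sub_zero, hiEm, ← sub_eq_zero, ← map_sub,
    Submodule.mkQ_apply, Submodule.Quotient.mk_eq_zero]
  refine ⟨x, ?_⟩
  show (P.complex.d 1 0 x, -(homToLin φ x)) = (P.complex.d 1 0 x, 0) - (0, homToLin φ x)
  rw [Prod.mk_sub_mk]
  exact Prod.ext_iff.2 ⟨by simp, by simp⟩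

end ExtAux
lemma extensionsSplit_pi {B : Type} [Ring B] (X N : Type) [AddCommGroup X] [Module B X]
    [AddCommGroup N] [Module B N] (h : ExtensionsSplit B X N) (d : ℕ) :
    ExtensionsSplit B (Fin d → X) N := by
  classical
  intro E _ _ i p hi hex hp
  have key : ∀ k : Fin d, ∃ t : X →ₗ[B] E, ∀ x, p (t x) = Pi.single k x := by
    intro k
    let Wk : Submodule B (Fin d → X) :=
      { carrier := {v | ∀ j, j ≠ k → v j = 0}
        add_mem' := by
          intro a b ha hb j hj
          show a j + b j = 0
          rw [ha j hj, hb j hj, add_zero]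
        zero_mem' := fun j _ => rfl
        smul_mem' := by
          intro c v hv j hj
          show c • v j = 0
          rw [hv j hj, smul_zero] }
    let Ek := Wk.comap p
    let iE : N →ₗ[B] Ek := i.codRestrict Ek (fun n => by
      show ∀ j, j ≠ k → p (i n) j = 0
      intro j _
      rw [(hex (i n)).2 ⟨n, rfl⟩]
      rfl)
    let pE : Ek →ₗ[B] X := (LinearMap.proj k) ∘ₗ p ∘ₗ Ek.subtype
    have hiE : Function.Injective iE := fun a b hab => hi (congrArg Subtype.val hab)
    have hpE : Function.Surjective pE := by
      intro x
      obtain ⟨e, he⟩ := hp (Pi.single k x)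
      refine ⟨⟨e, fun j hj => by rw [he]; exact Pi.single_eq_of_ne (M := fun _ => X) hj x⟩, ?_⟩
      show p e k = x
      rw [he]
      exact Pi.single_eq_same (M := fun _ => X) k x
    have hexE : Function.Exact iE pE := by
      rintro ⟨e, he⟩
      constructor
      · intro h0
        have hpe : p e = 0 := by
          funext j
          by_cases hj : j = k
          · subst hj; exact h0
          · exact he j hj
        obtain ⟨n, hn⟩ := (hex e).1 hpe
        exact ⟨n, Subtype.ext hn⟩
      · rintro ⟨n, hn⟩
        rw [← hn]
        show p (i n) k = 0
        rw [(hex (i n)).2 ⟨n, rfl⟩]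
        rfl
    obtain ⟨sk, hsk⟩ := h Ek iE pE hiE hexE hpE
    refine ⟨Ek.subtype ∘ₗ sk, fun x => ?_⟩
    funext j
    by_cases hj : j = k
    · subst hj
      rw [Pi.single_eq_same]
      exact LinearMap.congr_fun hsk x
    · rw [Pi.single_eq_of_ne (M := fun _ => X) hj]
      exact (sk x).2 j hj
  choose t ht using key
  refine ⟨∑ k, t k ∘ₗ LinearMap.proj k, LinearMap.ext fun v => ?_⟩
  show p ((∑ k, t k ∘ₗ LinearMap.proj k) v) = v
  rw [LinearMap.sum_apply, map_sum]
  calc ∑ k, p ((t k ∘ₗ LinearMap.proj k) v) = ∑ k, Pi.single k (v k) :=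
        Finset.sum_congr rfl fun k _ => ht k (v k)
  _ = v := Finset.univ_sum_single v


/-- If `X` is a finitely generated module over an Artin algebra `A` which is
Ext-projective in `gen(X)`, then over `A/ann_A(X)` there is a short exact sequence
`0 → A/a → X⁰ → X¹ → 0` with `X⁰ ∈ add X` and `X¹ ∈ gen X` Ext-projective in `gen X`. -/
theorem stmt2
    (R : Type) [CommRing R] [IsArtinianRing R] [IsLocalRing R]
    (A : Type) [Ring A] [Algebra R A] [Module.Finite R A]
    (X : Type) [AddCommGroup X] [Module A X] [Module.Finite A X]
    (hX : ∀ (N : Type) [AddCommGroup N] [Module A N], IsGenBy A X N →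
      Subsingleton (ext1 A X N)) :
    ∃ (X0 X1 : ModuleCat (AnnQuot A X)) (f : AnnQuot A X →ₗ[AnnQuot A X] X0)
      (g : X0 →ₗ[AnnQuot A X] X1),
      Function.Injective f ∧ Function.Exact f g ∧ Function.Surjective g ∧
      IsDirectSummandOf (AnnQuot A X) X X0 ∧ IsGenBy (AnnQuot A X) X X1 ∧
      ∀ (N : Type) [AddCommGroup N] [Module (AnnQuot A X) N],
        IsGenBy (AnnQuot A X) X N → Subsingleton (ext1 (AnnQuot A X) X1 N) := by
  classical
  letI : Module R X := Module.compHom X (algebraMap R A)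
  haveI : IsScalarTower R A X := ⟨fun r a x => by
    show (r • a) • x = algebraMap R A r • (a • x)
    rw [Algebra.smul_def, mul_smul]⟩
  haveI : Module.Finite R X := Module.Finite.trans A X
  obtain ⟨d, y, hy⟩ := Module.Finite.exists_fin (R := R) (M := X)
  -- commutation of R-scalars with B-scalars
  have hcomm : ∀ (b : AnnQuot A X) (r : R) (x : X), b • (r • x) = r • (b • x) := by
    intro b r x
    induction b using Quotient.inductionOn' with
    | h a =>
      show a • (algebraMap R A r • x) = algebraMap R A r • (a • x)
      rw [← mul_smul, ← mul_smul, Algebra.commutes]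
  -- the map f : B → X^d
  set f : AnnQuot A X →ₗ[AnnQuot A X] (Fin d → X) :=
    { toFun := fun b i => b • y i
      map_add' := fun b c => funext fun i => add_smul b c (y i)
      map_smul' := fun c b => funext fun i => mul_smul c b (y i) } with hfdef
  have hfm : ∀ (b : AnnQuot A X) (i : Fin d), f b i = b • y i := fun _ _ => rfl
  have hannz : ∀ (b : AnnQuot A X), (∀ x : X, b • x = 0) → b = 0 := by
    intro b hb
    induction b using Quotient.inductionOn' with
    | h a =>
      refine Quotient.sound' ?_
      intro x
      show a • x = (0 : A) • x
      rw [zero_smul]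
      exact hb x
  have hgen' : ∀ (b : AnnQuot A X) (x : X), (∀ i, b • y i = 0) → b • x = 0 := by
    intro b x hb
    have hx : x ∈ Submodule.span R (Set.range y) := hy ▸ Submodule.mem_top
    induction hx using Submodule.span_induction with
    | mem u hu => obtain ⟨i, rfl⟩ := hu; exact hb i
    | zero => exact smul_zero b
    | add u v _ _ hu hv => rw [smul_add, hu, hv, add_zero]
    | smul r u _ hu => rw [hcomm, hu, smul_zero]
  have hf_inj : Function.Injective f := by
    intro b c hbc
    rw [← sub_eq_zero]
    apply hannz
    intro x
    refine hgen' _ x fun i => ?_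
    have : f (b - c) = 0 := by rw [map_sub, hbc, sub_self]
    calc (b - c) • y i = f (b - c) i := rfl
    _ = 0 := by rw [this]; rfl
  -- the quotient
  set W := LinearMap.range f with hWdef
  set Q := ((Fin d → X) ⧸ W) with hQdef
  refine ⟨ModuleCat.of _ (Fin d → X), ModuleCat.of _ Q, f, W.mkQ, hf_inj, ?_, 
    Submodule.mkQ_surjective _, ⟨d, LinearMap.id, LinearMap.id, rfl⟩,
    ⟨d, W.mkQ, Submodule.mkQ_surjective _⟩, ?_⟩
  · -- exactness
    intro v
    constructor
    · intro hv
      have hvW : v ∈ W := (Submodule.Quotient.mk_eq_zero W).1 hv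
      exact hvW
    · intro hv
      exact (Submodule.Quotient.mk_eq_zero W).2 hv
  -- Ext-projectivity of X1 = Q
  intro N instN instN2 hgen
  set cπ := RingCon.mk' (annRingCon A X) with hcπ
  letI modAN : Module A N := Module.compHom N cπ
  -- N is generated by X over A
  have hgenA : IsGenBy A X N := by
    obtain ⟨n, q, hq⟩ := hgen
    let qA : (Fin n → X) →ₗ[A] N :=
      { toFun := q
        map_add' := fun a b => map_add q a b
        map_smul' := fun a v => q.map_smul (cπ a) v }
    exact ⟨n, qA, hq⟩
  -- extensions of X by N split over B
  have hXsplit : ExtensionsSplit (AnnQuot A X) X N := by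
    intro E _ _ i p hi hex hp
    letI : Module A E := Module.compHom E cπ
    let iA : N →ₗ[A] E :=
      { toFun := i
        map_add' := fun a b => map_add i a b
        map_smul' := fun a n => i.map_smul (cπ a) n }
    let pA : E →ₗ[A] X :=
      { toFun := p
        map_add' := fun a b => map_add p a b
        map_smul' := fun a e => p.map_smul (cπ a) e }
    obtain ⟨s, hs⟩ := extensionsSplit_of_subsingleton_ext1 X N (hX N hgenA) E iA pA hi hex hp
    have hsmul : ∀ (b : AnnQuot A X) (x : X), s (b • x) = b • s x := by
      intro b x
      induction b using Quotient.inductionOn' with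
      | h a => exact s.map_smul a x
    let sB : X →ₗ[AnnQuot A X] E :=
      { toFun := s
        map_add' := fun a b => map_add s a b
        map_smul' := fun b x => hsmul b x }
    exact ⟨sB, LinearMap.ext fun x => LinearMap.congr_fun hs x⟩
  have hPiSplit : ExtensionsSplit (AnnQuot A X) (Fin d → X) N :=
    extensionsSplit_pi X N hXsplit d
  -- extensions of Q by N split over B
  have hQsplit : ExtensionsSplit (AnnQuot A X) Q N := by
    intro E _ _ i p hi hex hp
    have hpi0 : ∀ n, p (i n) = 0 := fun n => (hex (i n)).2 ⟨n, rfl⟩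
    -- the pullback F of E → Q ← X^d
    set k : E × (Fin d → X) →ₗ[AnnQuot A X] Q :=
      p ∘ₗ LinearMap.fst _ _ _ - W.mkQ ∘ₗ LinearMap.snd _ _ _ with hkdef
    set F := LinearMap.ker k with hFdef
    have hmemF : ∀ w : E × (Fin d → X), w ∈ F ↔ p w.1 = W.mkQ w.2 := by
      intro w
      rw [LinearMap.mem_ker]
      constructor
      · intro hw
        have : p w.1 - W.mkQ w.2 = 0 := hw
        rwa [sub_eq_zero] at this
      · intro hw
        show p w.1 - W.mkQ w.2 = 0
        rw [hw, sub_self]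
    set iF : N →ₗ[AnnQuot A X] F :=
      LinearMap.codRestrict F ((LinearMap.inl _ E (Fin d → X)) ∘ₗ i) (fun n => by
        rw [hmemF]
        show p (i n) = W.mkQ 0
        rw [hpi0, map_zero]) with hiFdef
    set pF : F →ₗ[AnnQuot A X] (Fin d → X) := LinearMap.snd _ _ _ ∘ₗ F.subtype with hpFdef
    have hiF : Function.Injective iF := fun n n' h =>
      hi (congrArg (fun w : F => (w : E × (Fin d → X)).1) h)
    have hpF : Function.Surjective pF := by
      intro v
      obtain ⟨e, he⟩ := hp (W.mkQ v)
      exact ⟨⟨(e, v), (hmemF _).2 he⟩, rfl⟩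
    have hexF : Function.Exact iF pF := by
      rintro ⟨⟨e, v⟩, hev⟩
      constructor
      · intro h0
        have hv : v = 0 := h0
        have hpe : p e = 0 := by
          have := (hmemF (e, v)).1 hev
          rwa [hv, map_zero] at this
        obtain ⟨n, hn⟩ := (hex e).1 hpe
        refine ⟨n, Subtype.ext ?_⟩
        show ((i n, 0) : E × (Fin d → X)) = (e, v)
        rw [hn, hv]
      · rintro ⟨n, hn⟩
        rw [← hn]
        rfl
    obtain ⟨t, ht⟩ := hPiSplit F iF pF hiF hexF hpF
    set u : (Fin d → X) →ₗ[AnnQuot A X] E :=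
      LinearMap.fst _ _ _ ∘ₗ F.subtype ∘ₗ t with hudef
    have hu : ∀ v, p (u v) = W.mkQ v := by
      intro v
      have hsnd : ((t v : E × (Fin d → X))).2 = v := LinearMap.congr_fun ht v
      have := (hmemF (t v : E × (Fin d → X))).1 (t v).2
      rw [hsnd] at this
      exact this
    -- the element n₀
    have h1 : p (u (f 1)) = 0 := by
      rw [hu, Submodule.mkQ_apply, Submodule.Quotient.mk_eq_zero]
      exact ⟨1, rfl⟩
    obtain ⟨n₀, hn₀⟩ := (hex (u (f 1))).1 h1
    have hufb : ∀ b, u (f b) = i (b • n₀) := by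
      intro b
      have hb1 : f b = b • f 1 := by rw [← map_smul, smul_eq_mul, mul_one]
      rw [hb1, map_smul, ← hn₀, ← map_smul]
    -- the approximation map Λ
    obtain ⟨m, π, hπ⟩ := hgen
    obtain ⟨z, hz⟩ := hπ n₀
    have hr : ∀ j, ∃ c : Fin d → R, ∑ i', c i' • y i' = z j := fun j =>
      (Submodule.mem_span_range_iff_exists_fun R).1 (hy ▸ Submodule.mem_top)
    choose r hrz using hr
    set Λ : (Fin d → X) →ₗ[AnnQuot A X] (Fin m → X) :=
      { toFun := fun v j => ∑ i', r j i' • v i'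
        map_add' := fun v w => funext fun j => by
          show (∑ i', r j i' • (v i' + w i')) =
            (∑ i', r j i' • v i') + (∑ i', r j i' • w i')
          rw [← Finset.sum_add_distrib]
          exact Finset.sum_congr rfl fun i' _ => smul_add _ _ _
        map_smul' := fun b v => funext fun j => by
          show (∑ i', r j i' • (b • v i')) = b • ∑ i', r j i' • v i'
          rw [Finset.smul_sum]
          exact Finset.sum_congr rfl fun i' _ => (hcomm b (r j i') (v i')).symm } with hΛdef
    have hΛf : ∀ b, Λ (f b) = b • z := by
      intro b
      funext j
      show (∑ i', r j i' • (b • y i')) = b • z j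
      rw [← hrz j, Finset.smul_sum]
      exact Finset.sum_congr rfl fun i' _ => (hcomm b (r j i') (y i')).symm
    set s₀ : (Fin d → X) →ₗ[AnnQuot A X] E := u - i ∘ₗ (π ∘ₗ Λ) with hs₀def
    have hs₀ : ∀ b, s₀ (f b) = 0 := by
      intro b
      show u (f b) - i (π (Λ (f b))) = 0
      rw [hufb, hΛf]
      rw [show π (b • z) = b • π z from map_smul π b z, hz]
      exact sub_self _
    set s : Q →ₗ[AnnQuot A X] E := W.liftQ s₀ (by
      intro w hw
      obtain ⟨b, rfl⟩ := hw
      exact hs₀ b) with hsdef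
    refine ⟨s, LinearMap.ext fun q => ?_⟩
    obtain ⟨v, rfl⟩ := W.mkQ_surjective q
    show p (s (W.mkQ v)) = W.mkQ v
    have hsv : s (W.mkQ v) = s₀ v := by
      rw [Submodule.mkQ_apply, hsdef, Submodule.liftQ_apply]
    rw [hsv]
    show p (u v - i (π (Λ v))) = W.mkQ v
    rw [map_sub, hu, hpi0, sub_zero]
  exact subsingleton_ext1_of_extensionsSplit Q N hQsplit
end

section
/- Let A be an Artin algebra and Y a finitely generated right A-module which is Ext-injective in cog(Y), and set a' = ann_A(Y). Then Y has injective dimension at most 1 as a right A/a'-module; that is, there exists a short exact sequence 0 → Y → I⁰ → I¹ → 0 of right A/a'-modules in which I⁰ and I¹ are injective A/a'-modules. -/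
open CategoryTheory

section Split

variable {A : Type} [Ring A]

lemma split_of_subsingleton_ext1 {M P N : Type}
    [AddCommGroup M] [Module A M] [AddCommGroup P] [Module A P]
    [AddCommGroup N] [Module A N]
    (ι : N →ₗ[A] P) (π : P →ₗ[A] M) (hι : Function.Injective ι)
    (hex : Function.Exact ι π) (hπ : Function.Surjective π)
    (hext : Subsingleton (ext1 A M N)) :
    ∃ s : M →ₗ[A] P, π ∘ₗ s = LinearMap.id := by
  classical
  let Mc : ModuleCat A := ModuleCat.of A M
  let Nc : ModuleCat A := ModuleCat.of A N
  let Pc : ModuleCat A := ModuleCat.of A P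
  let prs : ProjectiveResolution Mc := ProjectiveResolution.of Mc
  let K := prs.complex
  let ε : K.X 0 ⟶ Mc := prs.π.f 0
  haveI : Epi (ModuleCat.ofHom π : Pc ⟶ Mc) := (ModuleCat.epi_iff_surjective _).mpr hπ
  let u : K.X 0 ⟶ Pc := Projective.factorThru ε (ModuleCat.ofHom π)
  have hu : ∀ z, π (u z) = ε z := by
    intro z
    have := Projective.factorThru_comp ε (ModuleCat.ofHom π)
    exact congrFun (congrArg (fun (f : K.X 0 ⟶ Mc) => (f : K.X 0 → Mc)) this) z
  have hd1 : ∀ x, π (u ((K.d 1 0) x)) = 0 := by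
    intro x
    rw [hu]
    have := prs.complex_d_comp_π_f_zero
    exact congrFun (congrArg (fun (f : K.X 1 ⟶ Mc) => (f : K.X 1 → Mc)) this) x
  have hmem : ∀ x : K.X 1, u ((K.d 1 0) x) ∈ LinearMap.range ι := by
    intro x
    have := (hex (u ((K.d 1 0) x))).mp (hd1 x)
    simpa using this
  let w : (K.X 1 : Type) →ₗ[A] P := LinearMap.comp (u.hom : (K.X 0 : Type) →ₗ[A] P) (K.d 1 0).hom
  have hmem' : ∀ x : K.X 1, w x ∈ LinearMap.range ι := hmem
  let v : (K.X 1 : Type) →ₗ[A] N :=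
    (LinearEquiv.ofInjective ι hι).symm.toLinearMap ∘ₗ
      LinearMap.codRestrict (LinearMap.range ι) w hmem'
  have hv : ∀ x, ι (v x) = u ((K.d 1 0) x) := by
    intro x
    have h1 : ((LinearEquiv.ofInjective ι hι)
        ((LinearEquiv.ofInjective ι hι).symm (LinearMap.codRestrict (LinearMap.range ι) w hmem' x)))
        = LinearMap.codRestrict (LinearMap.range ι) w hmem' x :=
      (LinearEquiv.ofInjective ι hι).apply_symm_apply _
    have h2 := congrArg (Subtype.val) h1
    rw [LinearEquiv.ofInjective_apply] at h2
    exact h2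
  have hc2 : (K.d 2 1) ≫ (ModuleCat.ofHom v) = 0 := by
    apply ModuleCat.hom_ext
    apply LinearMap.ext
    intro x
    apply hι
    show ι (v ((K.d 2 1) x)) = ι 0
    rw [map_zero, hv]
    have hdd : (K.d 2 1) ≫ (K.d 1 0) = 0 := K.d_comp_d 2 1 0
    have := congrFun (congrArg (fun (f : K.X 2 ⟶ K.X 0) => (f : K.X 2 → K.X 0)) hdd) x
    show u _ = (0 : P)
    calc u ((K.d 1 0) ((K.d 2 1) x)) = u (((K.d 2 1) ≫ (K.d 1 0)) x) := rfl
    _ = u 0 := by rw [hdd]; rfl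
    _ = 0 := map_zero _
  -- homology vanishing
  have hzero : Limits.IsZero ((K.linearYonedaObj ℤ Nc).homology 1) := by
    have h1 : Limits.IsZero (ext1 A M N) := ModuleCat.isZero_of_subsingleton _
    exact h1.of_iso (prs.isoExt (R := ℤ) 1 Nc).symm
  have hexat : (K.linearYonedaObj ℤ Nc).ExactAt 1 :=
    (HomologicalComplex.exactAt_iff_isZero_homology _ _).mpr hzero
  have hsc := (HomologicalComplex.exactAt_iff' (K.linearYonedaObj ℤ Nc) 0 1 2
    (by simp) (by simp)).mp hexat
  rw [ShortComplex.moduleCat_exact_iff] at hsc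
  obtain ⟨Psi0, hPsi⟩ := hsc (ModuleCat.ofHom v) (by
    show (K.linearYonedaObj ℤ Nc).d 1 2 (ModuleCat.ofHom v) = 0
    rw [ChainComplex.linearYonedaObj_d]
    show Linear.leftComp ℤ Nc (K.d 2 1) (ModuleCat.ofHom v) = 0
    rw [Linear.leftComp_apply]
    exact hc2)
  let Psi : K.X 0 ⟶ Nc := Psi0
  have hPsi1 : (K.d 1 0) ≫ Psi = ModuleCat.ofHom v := by
    have h1 : (K.linearYonedaObj ℤ Nc).d 0 1 Psi0 = ModuleCat.ofHom v := hPsi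
    rw [ChainComplex.linearYonedaObj_d] at h1
    exact h1
  let PsiL : (K.X 0 : Type) →ₗ[A] N := Psi.hom
  have hPsi' : ∀ x, PsiL ((K.d 1 0) x) = v x := by
    intro x
    change _ = (ModuleCat.ofHom v).hom x
    rw [← hPsi1]; rfl
  -- the factored map
  let εL : (K.X 0 : Type) →ₗ[A] M := ε.hom
  have hεsurj : Function.Surjective εL := by
    have : Epi ε := (inferInstance : Epi (prs.π.f 0))
    exact (ModuleCat.epi_iff_surjective ε).mp this
  let uL : (K.X 0 : Type) →ₗ[A] P := u.hom
  have huL : ∀ z, π (uL z) = εL z := hu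
  let hmap : (K.X 0 : Type) →ₗ[A] P := uL - (ι ∘ₗ PsiL)
  have hle : LinearMap.ker εL ≤ LinearMap.ker hmap := by
    intro z hz
    rw [LinearMap.mem_ker] at hz ⊢
    have hex0 := prs.exact₀
    rw [ShortComplex.moduleCat_exact_iff] at hex0
    obtain ⟨x, hx⟩ := hex0 z hz
    show uL z - ι (PsiL z) = 0
    rw [← hx, hPsi' x]
    have hv' : ι (v x) = uL ((K.d 1 0) x) := hv x
    rw [hv']
    exact sub_self _
  let q := εL.quotKerEquivOfSurjective hεsurj
  let s : M →ₗ[A] P := ((LinearMap.ker εL).liftQ hmap hle) ∘ₗ q.symm.toLinearMap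
  refine ⟨s, ?_⟩
  apply LinearMap.ext
  intro m
  obtain ⟨z, rfl⟩ := hεsurj m
  have h1 : q.symm (εL z) = Submodule.Quotient.mk z := by
    rw [LinearEquiv.symm_apply_eq]
    show εL z = q (Submodule.Quotient.mk z)
    simp [q, LinearMap.quotKerEquivOfSurjective]
  show π (s (εL z)) = εL z
  have h2 : s (εL z) = hmap z := by
    show ((LinearMap.ker εL).liftQ hmap hle) (q.symm (εL z)) = hmap z
    rw [h1]
    exact Submodule.liftQ_apply _ _ _
  rw [h2]
  show π (uL z - ι (PsiL z)) = εL z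
  rw [map_sub]
  have h3 : π (ι (PsiL z)) = 0 := hex.apply_apply_eq_zero _
  rw [huL, h3, sub_zero]

end Split

/-- If `Y` is a finitely generated module over an Artin algebra `A` which is
Ext-injective in `cog(Y)`, then `Y` has injective dimension at most `1` over `A/ann_A(Y)`. -/
theorem stmt3
    (R : Type) [CommRing R] [IsArtinianRing R] [IsLocalRing R]
    (A : Type) [Ring A] [Algebra R A] [Module.Finite R A]
    (Y : Type) [AddCommGroup Y] [Module A Y] [Module.Finite A Y]
    (hY : ∀ (M : Type) [AddCommGroup M] [Module A M], IsCogBy A Y M →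
      Subsingleton (ext1 A M Y)) :
    ∃ (I0 I1 : ModuleCat (AnnQuot A Y)) (f : Y →ₗ[AnnQuot A Y] I0)
      (g : I0 →ₗ[AnnQuot A Y] I1),
      Module.Injective (AnnQuot A Y) I0 ∧ Module.Injective (AnnQuot A Y) I1 ∧
      Function.Injective f ∧ Function.Exact f g ∧ Function.Surjective g := by
  classical
  let ρ : A →+* AnnQuot A Y := RingCon.mk' _
  have hρsurj : Function.Surjective ρ := fun b => Quotient.inductionOn' b fun a => ⟨a, rfl⟩
  -- finite generation of Y over R
  letI instRY : Module R Y := Module.compHom Y (algebraMap R A)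
  haveI : IsScalarTower R A Y := ⟨fun r a y => by
    show (r • a) • y = (algebraMap R A r) • (a • y)
    rw [Algebra.smul_def, mul_smul]⟩
  haveI : Module.Finite R Y := Module.Finite.trans A Y
  obtain ⟨n, vgen, hspan⟩ := Module.Finite.exists_fin (R := R) (M := Y)
  have hsmulRA : ∀ (r : R) (z : Y), r • z = (algebraMap R A r) • z := fun _ _ => rfl
  have hfaith : ∀ b : AnnQuot A Y, (∀ i, b • vgen i = 0) → b = 0 := by
    intro b hb
    obtain ⟨a, rfl⟩ := hρsurj b
    have hann : ∀ y : Y, a • y = 0 := by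
      intro y
      have hy : y ∈ Submodule.span R (Set.range vgen) := by rw [hspan]; trivial
      induction hy using Submodule.span_induction with
      | mem z hz =>
        obtain ⟨i, rfl⟩ := hz
        exact hb i
      | zero => exact smul_zero a
      | add z w _ _ hz hw => rw [smul_add, hz, hw, add_zero]
      | smul r z _ hz =>
        rw [hsmulRA, ← mul_smul, ← Algebra.commutes r a, mul_smul, hz, smul_zero]
    have : (annRingCon A Y) a 0 := by intro x; simpa using hann x
    exact (RingCon.eq _).mpr this
  -- embed Y in an injective module over the quotient
  let Yc : ModuleCat (AnnQuot A Y) := ModuleCat.of _ Y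
  let I0 : ModuleCat (AnnQuot A Y) := Injective.under Yc
  let f0 : Y →ₗ[AnnQuot A Y] I0 := (Injective.ι Yc).hom
  have hf0 : Function.Injective f0 := by
    have h : Mono (Injective.ι Yc) := inferInstance
    exact (ModuleCat.mono_iff_injective (Injective.ι Yc)).mp h
  haveI hI0inj : Module.Injective (AnnQuot A Y) I0 := by
    have h : Injective (ModuleCat.of (AnnQuot A Y) ↥I0) := by
      rw [ModuleCat.of_coe]; infer_instance
    exact Module.injective_module_of_injective_object _ _
  -- the cokernel
  let Cq := (↥I0) ⧸ (LinearMap.range f0)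
  let gq : ↥I0 →ₗ[AnnQuot A Y] Cq := (LinearMap.range f0).mkQ
  have hgsurj : Function.Surjective gq := Submodule.mkQ_surjective _
  have hexact : Function.Exact f0 gq :=
    LinearMap.exact_iff.mpr (Submodule.ker_mkQ _)
  -- Baer's criterion for the cokernel
  have hbaer : Module.Baer (AnnQuot A Y) Cq := by
    intro L φ
    let F : (↥I0 × ↥L) →ₗ[AnnQuot A Y] Cq :=
      gq ∘ₗ LinearMap.fst _ _ _ - φ ∘ₗ LinearMap.snd _ _ _
    let Pb : Submodule (AnnQuot A Y) (↥I0 × ↥L) := LinearMap.ker F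
    let πP : ↥Pb →ₗ[AnnQuot A Y] ↥L := (LinearMap.snd _ _ _) ∘ₗ Pb.subtype
    have hπPs : Function.Surjective πP := by
      intro l
      obtain ⟨x, hx⟩ := hgsurj (φ l)
      refine ⟨⟨(x, l), ?_⟩, rfl⟩
      show gq x - φ l = 0
      rw [hx]; exact sub_self _
    let ιpre : Y →ₗ[AnnQuot A Y] (↥I0 × ↥L) := LinearMap.prod f0 0
    have hιmem : ∀ y : Y, ιpre y ∈ Pb := by
      intro y
      show gq (f0 y) - φ 0 = 0
      rw [map_zero, hexact.apply_apply_eq_zero, sub_zero]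
    let ιP : Y →ₗ[AnnQuot A Y] ↥Pb := LinearMap.codRestrict Pb ιpre hιmem
    have hιinj : Function.Injective ιP := by
      intro y y' h
      apply hf0
      exact congrArg (fun p : ↥Pb => (p : ↥I0 × ↥L).1) h
    have hexP : Function.Exact ιP πP := by
      intro p
      constructor
      · intro hp
        have hp2 : (p : ↥I0 × ↥L).2 = 0 := hp
        have hmem := p.2
        have hgq : gq (p : ↥I0 × ↥L).1 = 0 := by
          have h1 : gq (p : ↥I0 × ↥L).1 - φ (p : ↥I0 × ↥L).2 = 0 := hmem
          rw [hp2, map_zero, sub_zero] at h1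
          exact h1
        have := (hexact ((p : ↥I0 × ↥L).1)).mp hgq
        obtain ⟨y, hy⟩ := this
        refine ⟨y, ?_⟩
        apply Subtype.ext
        apply Prod.ext
        · exact hy
        · exact hp2.symm
      · rintro ⟨y, rfl⟩
        show (LinearMap.prod f0 (0 : Y →ₗ[AnnQuot A Y] ↥L) y).2 = 0
        rw [LinearMap.prod_apply]
        rfl
    -- pass to A-module structures
    letI instAL : Module A ↥L := Module.compHom _ ρ
    letI instAP : Module A ↥Pb := Module.compHom _ ρ
    let ιPA : Y →ₗ[A] ↥Pb :=
      { toFun := ιP, map_add' := ιP.map_add, map_smul' := fun a y => ιP.map_smul (ρ a) y }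
    let πPA : ↥Pb →ₗ[A] ↥L :=
      { toFun := πP, map_add' := πP.map_add, map_smul' := fun a p => πP.map_smul (ρ a) p }
    have hιinjA : Function.Injective ιPA := hιinj
    have hπPsA : Function.Surjective πPA := hπPs
    have hexPA : Function.Exact ιPA πPA := hexP
    -- L is cogenerated by Y over A
    have hcog : IsCogBy A Y ↥L := by
      refine ⟨n, ?_, ?_⟩
      · exact
        { toFun := fun l i => (l : AnnQuot A Y) • vgen i
          map_add' := fun l l' => by
            funext i
            show ((l : AnnQuot A Y) + (l' : AnnQuot A Y)) • vgen i = _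
            rw [add_smul]
            rfl
          map_smul' := fun a l => by
            funext i
            show ((ρ a • (l : AnnQuot A Y))) • vgen i = a • ((l : AnnQuot A Y) • vgen i)
            rw [smul_eq_mul, mul_smul]
            rfl }
      · intro l l' h
        apply Subtype.ext
        have h2 : ∀ i, ((l : AnnQuot A Y) - (l' : AnnQuot A Y)) • vgen i = 0 := by
          intro i
          rw [sub_smul]
          have := congrFun h i
          exact sub_eq_zero_of_eq this
        have := hfaith _ h2
        exact sub_eq_zero.mp this
    have hsub : Subsingleton (ext1 A (↥L) Y) := hY (↥L) hcog
    obtain ⟨s, hs⟩ := split_of_subsingleton_ext1 ιPA πPA hιinjA hexPA hπPsA hsub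
    let sB : ↥L →ₗ[AnnQuot A Y] ↥Pb :=
      { toFun := s, map_add' := s.map_add
        map_smul' := fun b l => by
          obtain ⟨a, rfl⟩ := hρsurj b
          exact s.map_smul a l }
    let ψ : ↥L →ₗ[AnnQuot A Y] ↥I0 :=
      ((LinearMap.fst _ _ _) ∘ₗ Pb.subtype) ∘ₗ sB
    have hψ : ∀ l, gq (ψ l) = φ l := by
      intro l
      have h1 : πP (sB l) = l := DFunLike.congr_fun hs l
      have hmem := (sB l).2
      have h2 : gq ((sB l : ↥I0 × ↥L)).1 - φ ((sB l : ↥I0 × ↥L)).2 = 0 := hmem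
      have h3 : ((sB l : ↥I0 × ↥L)).2 = l := h1
      rw [h3] at h2
      exact sub_eq_zero.mp h2
    obtain ⟨Psi, hPsi⟩ := hI0inj.out L.subtype (Submodule.injective_subtype L) ψ
    refine ⟨gq ∘ₗ Psi, ?_⟩
    intro x hx
    show gq (Psi x) = φ ⟨x, hx⟩
    have h1 := hPsi ⟨x, hx⟩
    have h2 : (L.subtype ⟨x, hx⟩) = x := rfl
    rw [h2] at h1
    rw [h1]
    exact hψ _
  haveI hCinj : Module.Injective (AnnQuot A Y) Cq := hbaer.injective
  refine ⟨ModuleCat.of _ (ULift ↥I0), ModuleCat.of _ (ULift Cq),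
    ULift.moduleEquiv.symm.toLinearMap ∘ₗ f0,
    ULift.moduleEquiv.symm.toLinearMap ∘ₗ gq ∘ₗ ULift.moduleEquiv.toLinearMap,
    Module.ulift_injective_of_injective _ hI0inj,
    Module.ulift_injective_of_injective _ hCinj,
    ?_, ?_, ?_⟩
  · exact ((ULift.moduleEquiv (R := AnnQuot A Y) (M := ↥I0)).symm.injective.comp hf0)
  · intro x
    constructor
    · intro hx
      have h0 : gq ((ULift.moduleEquiv (R := AnnQuot A Y) (M := ↥I0)) x) = 0 := by
        have h1 := congrArg (ULift.moduleEquiv (R := AnnQuot A Y) (M := Cq)) hx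
        simpa using h1
      obtain ⟨y, hy⟩ := (hexact ((ULift.moduleEquiv (R := AnnQuot A Y) (M := ↥I0)) x)).mp h0
      refine ⟨y, ?_⟩
      show (ULift.moduleEquiv (R := AnnQuot A Y) (M := ↥I0)).symm (f0 y) = x
      rw [hy]
      exact (ULift.moduleEquiv (R := AnnQuot A Y) (M := ↥I0)).symm_apply_apply x
    · rintro ⟨y, rfl⟩
      exact ULift.ext _ _ (hexact.apply_apply_eq_zero y)
  · intro c
    obtain ⟨x, hx⟩ := hgsurj c.down
    exact ⟨ULift.up x, ULift.ext _ _ hx⟩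
end

section
/- Let A be an Artin algebra, T• a two-term tilting complex over A given by α : T⁻¹ → T⁰, and B = End_{K(Mod-A)}(T•). Let θ : B → End_A(H⁰(T•)) be the ring homomorphism sending the homotopy class of a chain map φ to the induced endomorphism H⁰(φ) of H⁰(T•) = Coker α. Then θ is surjective and its kernel equals 𝔟 = {φ ∈ B : φ ∘ σ = 0 in K(Mod-A) for every σ ∈ Hom_{K(Mod-A)}(A, T•)}, the annihilator of the left B-module Hom_{K(Mod-A)}(A, T•); consequently θ induces a ring isomorphism B/𝔟 ≅ End_A(H⁰(T•)). -/
open CategoryTheory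

section Complexes

open CategoryTheory Limits

variable (A : Type) [Ring A]

/-- The homotopy category `K(Mod-A)` of cochain complexes of `A`-modules. -/
abbrev HtpyCat := HomotopyCategory (ModuleCat.{0} A) (ComplexShape.up ℤ)

/-- A cochain complex viewed as an object of the homotopy category. -/
noncomputable abbrev toK (T : CochainComplex (ModuleCat.{0} A) ℤ) : HtpyCat A :=
  (HomotopyCategory.quotient (ModuleCat.{0} A) (ComplexShape.up ℤ)).obj T

/-- An `A`-module viewed as a complex concentrated in degree `0`, in the homotopy category. -/
noncomputable abbrev sgl (M : Type) [AddCommGroup M] [Module A M] : HtpyCat A :=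
  toK A ((HomologicalComplex.single (ModuleCat.{0} A) (ComplexShape.up ℤ) 0).obj (ModuleCat.of A M))

/-- `T` is a two-term complex, concentrated in degrees `-1` and `0`. -/
def IsTwoTerm (T : CochainComplex (ModuleCat.{0} A) ℤ) : Prop :=
  ∀ i : ℤ, i ≠ -1 → i ≠ 0 → IsZero (T.X i)

/-- `T` is a bounded complex of finitely generated projective `A`-modules. -/
def IsBddFgProj (T : CochainComplex (ModuleCat.{0} A) ℤ) : Prop :=
  (∃ a b : ℤ, ∀ i : ℤ, (i < a ∨ b < i) → IsZero (T.X i)) ∧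
  (∀ i : ℤ, Module.Projective A (T.X i)) ∧ ∀ i : ℤ, Module.Finite A (T.X i)

/-- `T` is a tilting complex: it is a bounded complex of finitely generated projective
modules, self-orthogonal in nonzero degrees, and it generates `K^b(proj A)`. -/
def IsTiltingComplex (T : CochainComplex (ModuleCat.{0} A) ℤ) : Prop :=
  IsBddFgProj A T ∧
  (∀ i : ℤ, i ≠ 0 → ∀ f : toK A T ⟶ (toK A T)⟦i⟧, f = 0) ∧
  ∀ M : CochainComplex (ModuleCat.{0} A) ℤ, IsBddFgProj A M →
    (∀ i : ℤ, ∀ f : (toK A T)⟦i⟧ ⟶ toK A M, f = 0) → IsZero (toK A M)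

/-- `T` is a two-term tilting complex. -/
def IsTwoTermTilting (T : CochainComplex (ModuleCat.{0} A) ℤ) : Prop :=
  IsTwoTerm A T ∧ IsTiltingComplex A T

/-- The `0`-th homology `H⁰(T) = Coker (d : T⁻¹ → T⁰)` of a two-term complex. -/
def H0 (T : CochainComplex (ModuleCat.{0} A) ℤ) : Type :=
  T.X 0 ⧸ LinearMap.range (T.d (-1) 0).hom

noncomputable instance (T : CochainComplex (ModuleCat.{0} A) ℤ) : AddCommGroup (H0 A T) :=
  inferInstanceAs (AddCommGroup (T.X 0 ⧸ LinearMap.range (T.d (-1) 0).hom))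

noncomputable instance (T : CochainComplex (ModuleCat.{0} A) ℤ) : Module A (H0 A T) :=
  inferInstanceAs (Module A (T.X 0 ⧸ LinearMap.range (T.d (-1) 0).hom))

end Complexes

section Theta

open CategoryTheory Limits

variable (A : Type) [Ring A]

/-- The ring homomorphism `End_{K(Mod A)}(T) → End_A(Hⁱ(T))` induced by the homology functor. -/
noncomputable def thetaH (T : CochainComplex (ModuleCat.{0} A) ℤ) (i : ℤ) :
    End (toK A T) →+*
      End ((HomotopyCategory.homologyFunctor (ModuleCat.{0} A) (ComplexShape.up ℤ) i).obj
        (toK A T)) where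
  toFun φ := (HomotopyCategory.homologyFunctor (ModuleCat.{0} A) (ComplexShape.up ℤ) i).map φ
  map_one' := (HomotopyCategory.homologyFunctor (ModuleCat.{0} A) (ComplexShape.up ℤ) i).map_id _
  map_mul' φ ψ :=
    (HomotopyCategory.homologyFunctor (ModuleCat.{0} A) (ComplexShape.up ℤ) i).map_comp ψ φ
  map_zero' := (HomotopyCategory.homologyFunctor (ModuleCat.{0} A) (ComplexShape.up ℤ) i).map_zero _ _
  map_add' _ _ := Functor.map_add _

end Theta

section BCon

open CategoryTheory Limits

variable (A : Type) [Ring A]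

/-- The congruence on `B = End_{K(Mod A)}(T)` modulo the annihilator `𝔟` of the left
`B`-module `Hom_{K(Mod A)}(A, T)`. -/
noncomputable def bCon (T : CochainComplex (ModuleCat.{0} A) ℤ) :
    RingCon (End (toK A T)) where
  r φ ψ := ∀ σ : sgl A A ⟶ toK A T, σ ≫ φ = σ ≫ ψ
  iseqv := ⟨fun _ _ => rfl, fun h σ => (h σ).symm, fun h1 h2 σ => (h1 σ).trans (h2 σ)⟩
  mul' := @fun φ ψ φ' ψ' h1 h2 σ => by
    rw [End.mul_def, End.mul_def, ← Category.assoc, ← Category.assoc, h2 σ, h1 (σ ≫ ψ')]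
  add' := @fun φ ψ φ' ψ' h1 h2 σ => by
    rw [Preadditive.comp_add, Preadditive.comp_add, h1 σ, h2 σ]

end BCon


section Stmt10AuxSec

open CategoryTheory Limits HomologicalComplex

namespace Stmt10Aux


variable {A : Type} [Ring A]

lemma lift_range {P X Y : ModuleCat.{0} A} [Module.Projective A P]
    (w : X ⟶ Y) (v : P ⟶ Y) (hv : ∀ p : P, v p ∈ LinearMap.range w.hom) :
    ∃ h : P ⟶ X, h ≫ w = v := by
  obtain ⟨h, hh⟩ := Module.projective_lifting_property w.hom.rangeRestrict
    (LinearMap.codRestrict (LinearMap.range w.hom) v.hom hv) (LinearMap.surjective_rangeRestrict _)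
  refine ⟨ModuleCat.ofHom h, ?_⟩
  ext p
  have := congrArg Subtype.val (LinearMap.congr_fun hh p)
  exact this

variable (T : CochainComplex (ModuleCat.{0} A) ℤ)

/-- inclusion of `T.X 0` into the kernel of `S.g` when `S.g = 0`. -/
noncomputable def pker (hg : (T.sc 0).g = 0) :
    T.X 0 ⟶ (T.sc 0).moduleCatLeftHomologyData.K :=
  ModuleCat.ofHom (LinearMap.codRestrict _ LinearMap.id (fun x => by
    rw [LinearMap.mem_ker, hg]; rfl))

noncomputable def iota (hg : (T.sc 0).g = 0) : T.X 0 ⟶ T.cycles 0 :=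
  pker T hg ≫ (T.sc 0).moduleCatCyclesIso.inv

noncomputable def qMap (hg : (T.sc 0).g = 0) : T.X 0 ⟶ T.homology 0 :=
  iota T hg ≫ T.homologyπ 0

lemma iota_iCycles (hg : (T.sc 0).g = 0) : iota T hg ≫ T.iCycles 0 = 𝟙 (T.X 0) := by
  show pker T hg ≫ ((T.sc 0).moduleCatCyclesIso.inv ≫ (T.sc 0).iCycles) = 𝟙 (T.X 0)
  rw [ShortComplex.moduleCatCyclesIso_inv_iCycles]
  ext x
  rfl

lemma iCycles_iota (hg : (T.sc 0).g = 0) : T.iCycles 0 ≫ iota T hg = 𝟙 (T.cycles 0) := by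
  rw [← cancel_mono (T.iCycles 0), Category.assoc, iota_iCycles, Category.comp_id,
    Category.id_comp]

lemma qMap_naturality (hg : (T.sc 0).g = 0) (f : T ⟶ T) :
    f.f 0 ≫ qMap T hg = qMap T hg ≫ homologyMap f 0 := by
  have h1 : f.f 0 ≫ iota T hg = iota T hg ≫ cyclesMap f 0 := by
    rw [← cancel_mono (T.iCycles 0), Category.assoc, Category.assoc, cyclesMap_i,
      iota_iCycles, ← Category.assoc, iota_iCycles, Category.id_comp, Category.comp_id]
  rw [qMap, ← Category.assoc, h1, Category.assoc, Category.assoc, homologyπ_naturality]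

lemma qMap_eq (hg : (T.sc 0).g = 0) :
    qMap T hg = pker T hg ≫ (T.sc 0).moduleCatLeftHomologyData.π ≫
      (T.sc 0).moduleCatHomologyIso.inv := by
  show pker T hg ≫ ((T.sc 0).moduleCatCyclesIso.inv ≫ (T.sc 0).homologyπ) = _
  rw [ShortComplex.moduleCatCyclesIso_inv_π]

lemma qMap_surjective (hg : (T.sc 0).g = 0) : Function.Surjective (qMap T hg) := by
  rw [qMap_eq]
  intro z
  obtain ⟨z', rfl⟩ := ((T.sc 0).moduleCatHomologyIso.symm.toLinearEquiv).surjective z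
  obtain ⟨⟨x, hx⟩, rfl⟩ := Submodule.Quotient.mk_surjective _ z'
  exact ⟨x, rfl⟩

lemma qMap_zero_iff (hg : (T.sc 0).g = 0) (x : T.X 0) :
    qMap T hg x = 0 ↔ x ∈ LinearMap.range (T.sc 0).f.hom := by
  rw [qMap_eq]
  have hinj := ((T.sc 0).moduleCatHomologyIso.symm.toLinearEquiv).injective
  constructor
  · intro h
    have : Submodule.Quotient.mk (p := LinearMap.range (T.sc 0).moduleCatToCycles)
        (pker T hg x) = 0 := by
      apply hinj
      exact h.trans (map_zero _).symm
    have this := (Submodule.Quotient.mk_eq_zero _).1 this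
    obtain ⟨y, hy⟩ := this
    exact ⟨y, congrArg Subtype.val hy⟩
  · rintro ⟨y, rfl⟩
    have : Submodule.Quotient.mk (p := LinearMap.range (T.sc 0).moduleCatToCycles)
        (pker T hg ((T.sc 0).f y)) = 0 := by
      refine (Submodule.Quotient.mk_eq_zero _).2 ?_
      exact ⟨y, rfl⟩
    show ((T.sc 0).moduleCatHomologyIso.inv) (Submodule.Quotient.mk (pker T hg _)) = 0
    rw [this]
    exact map_zero _

/-- the single complex with `A` in degree 0. -/
noncomputable abbrev SA (A : Type) [Ring A] : CochainComplex (ModuleCat.{0} A) ℤ :=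
  (HomologicalComplex.single (ModuleCat.{0} A) (ComplexShape.up ℤ) 0).obj (ModuleCat.of A A)

lemma rel_prev : (ComplexShape.up ℤ).Rel ((ComplexShape.up ℤ).prev 0) 0 := by
  rw [CochainComplex.prev]
  show (0 : ℤ) - 1 + 1 = 0
  ring

lemma rel01 : (ComplexShape.up ℤ).Rel 0 1 := by
  show (0 : ℤ) + 1 = 1
  ring

lemma mem_range_of_comp_zero (f : T ⟶ T) (s : SA A ⟶ T)
    (hsf : (HomotopyCategory.quotient (ModuleCat.{0} A) (ComplexShape.up ℤ)).map (s ≫ f) = 0)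
    (e : (SA A).X 0) :
    f.f 0 (s.f 0 e) ∈ LinearMap.range (T.sc 0).f.hom := by
  have h0 : (HomotopyCategory.quotient (ModuleCat.{0} A) (ComplexShape.up ℤ)).map
      (0 : SA A ⟶ T) = 0 := Functor.map_zero _ _ _
  have H : Homotopy (s ≫ f) 0 := HomotopyCategory.homotopyOfEq _ _ (by rw [hsf, h0])
  have hc := H.comm 0
  rw [dNext_eq H.hom rel01, prevD_eq H.hom rel_prev,
    HomologicalComplex.single_obj_d, Limits.zero_comp, HomologicalComplex.zero_f] at hc
  have hce := congr($hc e)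
  simp only [HomologicalComplex.comp_f, ModuleCat.hom_add, ModuleCat.hom_zero, LinearMap.add_apply, LinearMap.zero_apply,
    zero_add, add_zero] at hce
  exact ⟨H.hom 0 ((ComplexShape.up ℤ).prev 0) e, hce.symm⟩

lemma comp_homotopic_zero (h2t : IsTwoTerm A T) (f : T ⟶ T)
    (hf : ∀ x : T.X 0, f.f 0 x ∈ LinearMap.range (T.sc 0).f.hom) (s : SA A ⟶ T) :
    (HomotopyCategory.quotient (ModuleCat.{0} A) (ComplexShape.up ℤ)).map (s ≫ f) = 0 := by
  haveI : Module.Projective A (ModuleCat.of A A) := inferInstanceAs (Module.Projective A A)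
  obtain ⟨h', hh'⟩ := lift_range (P := ModuleCat.of A A) (T.d ((ComplexShape.up ℤ).prev 0) 0)
    ((HomologicalComplex.singleObjXSelf (ComplexShape.up ℤ) 0 (ModuleCat.of A A)).inv
      ≫ (s ≫ f).f 0) (fun p => hf _)
  set hcomp : (SA A).X 0 ⟶ T.X ((ComplexShape.up ℤ).prev 0) :=
    (HomologicalComplex.singleObjXSelf (ComplexShape.up ℤ) 0 (ModuleCat.of A A)).hom ≫ h'
    with hcompdef
  have hkey : hcomp ≫ T.d ((ComplexShape.up ℤ).prev 0) 0 = (s ≫ f).f 0 := by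
    rw [hcompdef, Category.assoc, hh', ← Category.assoc, Iso.hom_inv_id, Category.id_comp]
  set homs : ∀ i j, (SA A).X i ⟶ T.X j := fun i j =>
    if hij : i = 0 ∧ j = (ComplexShape.up ℤ).prev 0 then
      eqToHom (by rw [hij.1]) ≫ hcomp ≫ eqToHom (by rw [hij.2]) else 0 with homsdef
  have homs00 : homs 0 ((ComplexShape.up ℤ).prev 0) = hcomp := by
    rw [homsdef]
    simp
  have ho : Homotopy (s ≫ f) 0 := by
    refine ⟨homs, ?_, ?_⟩
    · intro i j hnr
      rw [homsdef]
      dsimp only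
      split_ifs with hij
      · obtain ⟨rfl, rfl⟩ := hij
        exact absurd rel_prev hnr
      · rfl
    · intro i
      by_cases hi : i = 0
      · subst hi
        rw [dNext_eq homs rel01, prevD_eq homs rel_prev, homs00,
          HomologicalComplex.single_obj_d, Limits.zero_comp, HomologicalComplex.zero_f,
          hkey, zero_add, add_zero]
      · exact (HomologicalComplex.isZero_single_obj_X (ComplexShape.up ℤ) 0
          (ModuleCat.of A A) i hi).eq_of_src _ _
  rw [HomotopyCategory.eq_of_homotopy _ _ ho, Functor.map_zero]

lemma sc_g_zero (h2t : IsTwoTerm A T) : (T.sc 0).g = 0 := by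
  refine (h2t ((ComplexShape.up ℤ).next 0) ?_ ?_).eq_of_tgt _ _ <;>
    rw [CochainComplex.next] <;> omega

/-- the chain map `A[0] ⟶ T` given by `x : T.X 0`. -/
noncomputable def sx (h2t : IsTwoTerm A T) (x : T.X 0) : SA A ⟶ T :=
  HomologicalComplex.mkHomFromSingle (ModuleCat.ofHom (LinearMap.toSpanSingleton A (T.X 0) x))
    (fun k hk => (h2t k (by have hk' : (0 : ℤ) + 1 = k := hk; omega)
      (by have hk' : (0 : ℤ) + 1 = k := hk; omega)).eq_of_tgt _ _)

lemma sx_f (h2t : IsTwoTerm A T) (x : T.X 0) :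
    (sx T h2t x).f 0
      ((HomologicalComplex.singleObjXSelf (ComplexShape.up ℤ) 0
        (ModuleCat.of A A)).inv (1 : A)) = x := by
  rw [sx, HomologicalComplex.mkHomFromSingle_f]
  show LinearMap.toSpanSingleton A (T.X 0) x
    ((HomologicalComplex.singleObjXSelf (ComplexShape.up ℤ) 0 (ModuleCat.of A A)).hom
      ((HomologicalComplex.singleObjXSelf (ComplexShape.up ℤ) 0
        (ModuleCat.of A A)).inv (1 : A))) = x
  have : ((HomologicalComplex.singleObjXSelf (ComplexShape.up ℤ) 0 (ModuleCat.of A A)).hom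
      ((HomologicalComplex.singleObjXSelf (ComplexShape.up ℤ) 0
        (ModuleCat.of A A)).inv (1 : A))) = (1 : A) := by
    simp
  rw [this]
  exact one_smul A x

/-- A chain map `T ⟶ T` built out of components in degrees `0` and `-1`. -/
noncomputable def mkF (h2t : IsTwoTerm A T) (f0 : T.X 0 ⟶ T.X 0)
    (fm : T.X ((ComplexShape.up ℤ).prev 0) ⟶ T.X ((ComplexShape.up ℤ).prev 0))
    (hfm : fm ≫ T.d ((ComplexShape.up ℤ).prev 0) 0 =
      T.d ((ComplexShape.up ℤ).prev 0) 0 ≫ f0) : T ⟶ T where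
  f i :=
    if h0 : i = 0 then eqToHom (congrArg T.X h0) ≫ f0 ≫ eqToHom (congrArg T.X h0).symm
    else if hm : i = (ComplexShape.up ℤ).prev 0 then
      eqToHom (congrArg T.X hm) ≫ fm ≫ eqToHom (congrArg T.X hm).symm
    else 0
  comm' := by
    intro i j hrel
    have hij : i + 1 = j := hrel
    have hprev : (ComplexShape.up ℤ).prev 0 = -1 := by
      rw [CochainComplex.prev]; ring
    by_cases h0 : i = 0
    · subst h0
      exact (h2t j (by omega) (by omega)).eq_of_tgt _ _
    · by_cases hm : i = (ComplexShape.up ℤ).prev 0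
      · subst hm
        rw [hprev] at hij
        obtain rfl : j = 0 := by omega
        rw [dif_neg (by rw [hprev]; decide), dif_pos rfl, dif_pos rfl]
        simp only [eqToHom_refl, Category.comp_id, Category.id_comp]
        exact hfm
      · refine (h2t i (fun h => hm (h.trans hprev.symm)) h0).eq_of_src _ _

lemma mkF_f0 (h2t : IsTwoTerm A T) (f0 : T.X 0 ⟶ T.X 0)
    (fm : T.X ((ComplexShape.up ℤ).prev 0) ⟶ T.X ((ComplexShape.up ℤ).prev 0))
    (hfm : fm ≫ T.d ((ComplexShape.up ℤ).prev 0) 0 =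
      T.d ((ComplexShape.up ℤ).prev 0) 0 ≫ f0) :
    (mkF T h2t f0 fm hfm).f 0 = f0 := by
  show (if h0 : (0 : ℤ) = 0 then
      eqToHom (congrArg T.X h0) ≫ f0 ≫ eqToHom (congrArg T.X h0).symm
    else if hm : (0 : ℤ) = (ComplexShape.up ℤ).prev 0 then
      eqToHom (congrArg T.X hm) ≫ fm ≫ eqToHom (congrArg T.X hm).symm
    else 0) = f0
  rw [dif_pos rfl]
  simp

/-- Lifting a ring homomorphism to a quotient by a compatible congruence. -/
noncomputable def quotHom {B C : Type} [Ring B] [Ring C] (c : RingCon B) (f : B →+* C)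
    (hf : ∀ a b : B, c a b → f a = f b) : c.Quotient →+* C where
  toFun x := Quotient.liftOn' x f hf
  map_one' := map_one f
  map_mul' x y := Quotient.inductionOn₂' x y (fun a b => map_mul f a b)
  map_zero' := map_zero f
  map_add' x y := Quotient.inductionOn₂' x y (fun a b => map_add f a b)

lemma quotHom_mk {B C : Type} [Ring B] [Ring C] (c : RingCon B) (f : B →+* C)
    (hf : ∀ a b : B, c a b → f a = f b) (φ : B) :
    quotHom c f hf (φ : c.Quotient) = f φ := rfl


end Stmt10Aux

end Stmt10AuxSec

/-- For a two-term tilting complex `T` over an Artin algebra `A`, the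
canonical ring homomorphism `θ : B = End_{K(Mod A)}(T) → End_A(H⁰(T))` is surjective with
kernel the annihilator `𝔟` of `Hom_{K(Mod A)}(A, T)`, and hence induces a ring isomorphism
`B/𝔟 ≅ End_A(H⁰(T))`. -/
theorem stmt10
    (R : Type) [CommRing R] [IsArtinianRing R] [IsLocalRing R]
    (A : Type) [Ring A] [Algebra R A] [Module.Finite R A]
    (T : CochainComplex (ModuleCat.{0} A) ℤ) (hT : IsTwoTermTilting A T) :
    Function.Surjective (thetaH A T 0) ∧
    (∀ φ : CategoryTheory.End (toK A T),
      thetaH A T 0 φ = 0 ↔ ∀ σ : sgl A A ⟶ toK A T, σ ≫ φ = 0) ∧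
    ∃ e : (bCon A T).Quotient ≃+*
        CategoryTheory.End ((HomotopyCategory.homologyFunctor (ModuleCat.{0} A)
          (ComplexShape.up ℤ) 0).obj (toK A T)),
      ∀ φ : CategoryTheory.End (toK A T), e (φ : (bCon A T).Quotient) = thetaH A T 0 φ := by
  classical
  obtain ⟨h2t, ⟨⟨hbd, hproj, hfin⟩, hortho, hgen⟩⟩ := hT
  have hg : (T.sc 0).g = 0 := Stmt10Aux.sc_g_zero T h2t
  set Q := HomotopyCategory.quotient (ModuleCat.{0} A) (ComplexShape.up ℤ) with hQdef
  set ε : (HomotopyCategory.homologyFunctor (ModuleCat.{0} A) (ComplexShape.up ℤ) 0).obj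
      (toK A T) ≅ T.homology 0 := (HomotopyCategory.homologyFunctorFactors (ModuleCat.{0} A)
    (ComplexShape.up ℤ) 0).app T with hεdef
  haveI hepi : Epi (Stmt10Aux.qMap T hg) :=
    (ModuleCat.epi_iff_surjective _).mpr (Stmt10Aux.qMap_surjective T hg)
  have htheta : ∀ f : T ⟶ T, thetaH A T 0 (Q.map f)
      = ε.hom ≫ HomologicalComplex.homologyMap f 0 ≫ ε.inv := by
    intro f
    have hnat : (HomotopyCategory.homologyFunctor (ModuleCat.{0} A) (ComplexShape.up ℤ) 0).map
          (Q.map f) ≫ ε.hom = ε.hom ≫ HomologicalComplex.homologyMap f 0 :=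
      (HomotopyCategory.homologyFunctorFactors (ModuleCat.{0} A)
        (ComplexShape.up ℤ) 0).hom.naturality f
    have heq : thetaH A T 0 (Q.map f) =
        (HomotopyCategory.homologyFunctor (ModuleCat.{0} A) (ComplexShape.up ℤ) 0).map
          (Q.map f) := rfl
    rw [heq, ← Category.assoc, ← hnat, Category.assoc, ε.hom_inv_id]
    exact (Category.comp_id _).symm
  have hiff : ∀ f : T ⟶ T,
      (thetaH A T 0 (Q.map f) = 0 ↔ HomologicalComplex.homologyMap f 0 = 0) := by
    intro f
    rw [htheta f]
    constructor
    · intro h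
      calc HomologicalComplex.homologyMap f 0
          = ε.inv ≫ (ε.hom ≫ HomologicalComplex.homologyMap f 0 ≫ ε.inv) ≫ ε.hom := by
            simp
        _ = 0 := by rw [h]; simp
    · intro h
      rw [h]
      simp
  have hker : ∀ φ : CategoryTheory.End (toK A T),
      thetaH A T 0 φ = 0 ↔ ∀ σ : sgl A A ⟶ toK A T, σ ≫ φ = 0 := by
    intro φ
    obtain ⟨f, rfl⟩ := Q.map_surjective φ
    constructor
    · intro hθ σ
      obtain ⟨s, rfl⟩ := Q.map_surjective σ
      have hm : HomologicalComplex.homologyMap f 0 = 0 := (hiff f).1 hθ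
      have hf : ∀ x : T.X 0, f.f 0 x ∈ LinearMap.range (T.sc 0).f.hom := by
        intro x
        rw [← Stmt10Aux.qMap_zero_iff T hg]
        have hx : Stmt10Aux.qMap T hg (f.f 0 x) =
            HomologicalComplex.homologyMap f 0 (Stmt10Aux.qMap T hg x) :=
          congr($(Stmt10Aux.qMap_naturality T hg f) x)
        rw [hx, hm]
        rfl
      rw [← Q.map_comp]
      exact Stmt10Aux.comp_homotopic_zero T h2t f hf s
    · intro hσ
      refine (hiff f).2 ?_
      have hf : ∀ x : T.X 0, f.f 0 x ∈ LinearMap.range (T.sc 0).f.hom := by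
        intro x
        have h1 : Q.map (Stmt10Aux.sx T h2t x) ≫ Q.map f = 0 := hσ (Q.map (Stmt10Aux.sx T h2t x))
        rw [← Q.map_comp] at h1
        have h2 := Stmt10Aux.mem_range_of_comp_zero T f (Stmt10Aux.sx T h2t x) h1
          ((HomologicalComplex.singleObjXSelf (ComplexShape.up ℤ) 0
            (ModuleCat.of A A)).inv (1 : A))
        rwa [Stmt10Aux.sx_f T h2t x] at h2
      rw [← cancel_epi (Stmt10Aux.qMap T hg), Limits.comp_zero,
        ← Stmt10Aux.qMap_naturality T hg f]
      exact ModuleCat.hom_ext <| LinearMap.ext fun x => (Stmt10Aux.qMap_zero_iff T hg (f.f 0 x)).2 (hf x)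
  have hsurj : Function.Surjective (thetaH A T 0) := by
    intro gg
    set g : T.homology 0 ⟶ T.homology 0 := ε.inv ≫ gg ≫ ε.hom with hgdef
    haveI := hproj 0
    obtain ⟨f0, hf0⟩ := Module.projective_lifting_property
      (Stmt10Aux.qMap T hg).hom
      (g.hom.comp (Stmt10Aux.qMap T hg).hom)
      (Stmt10Aux.qMap_surjective T hg)
    haveI := hproj ((ComplexShape.up ℤ).prev 0)
    obtain ⟨fm, hfm⟩ := Stmt10Aux.lift_range (T.d ((ComplexShape.up ℤ).prev 0) 0)
      (T.d ((ComplexShape.up ℤ).prev 0) 0 ≫ (ModuleCat.ofHom f0 : T.X 0 ⟶ T.X 0))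
      (fun y => by
        have h1 : Stmt10Aux.qMap T hg (f0 (T.d ((ComplexShape.up ℤ).prev 0) 0 y)) =
            g (Stmt10Aux.qMap T hg (T.d ((ComplexShape.up ℤ).prev 0) 0 y)) :=
          LinearMap.congr_fun hf0 _
        have h2 : Stmt10Aux.qMap T hg (T.d ((ComplexShape.up ℤ).prev 0) 0 y) = 0 :=
          (Stmt10Aux.qMap_zero_iff T hg _).2 ⟨y, rfl⟩
        exact (Stmt10Aux.qMap_zero_iff T hg _).1 (by
          show Stmt10Aux.qMap T hg (f0 ((T.d ((ComplexShape.up ℤ).prev 0) 0) y)) = 0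
          rw [h1, h2, map_zero]))
    have hHF : HomologicalComplex.homologyMap (Stmt10Aux.mkF T h2t (ModuleCat.ofHom f0) fm hfm) 0 = g := by
      rw [← cancel_epi (Stmt10Aux.qMap T hg),
        ← Stmt10Aux.qMap_naturality T hg (Stmt10Aux.mkF T h2t (ModuleCat.ofHom f0) fm hfm),
        Stmt10Aux.mkF_f0]
      exact ModuleCat.hom_ext hf0
    refine ⟨Q.map (Stmt10Aux.mkF T h2t (ModuleCat.ofHom f0) fm hfm), ?_⟩
    rw [htheta, hHF, hgdef]
    simp
  refine ⟨hsurj, hker, ?_⟩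
  have hrel : ∀ φ ψ : CategoryTheory.End (toK A T),
      (bCon A T) φ ψ → thetaH A T 0 φ = thetaH A T 0 ψ := by
    intro φ ψ h
    have h' : ∀ σ : sgl A A ⟶ toK A T, σ ≫ φ = σ ≫ ψ := h
    rw [← sub_eq_zero, ← RingHom.map_sub]
    refine (hker (φ - ψ)).2 fun σ => ?_
    rw [Preadditive.comp_sub, h' σ, sub_self]
  refine ⟨RingEquiv.ofBijective (Stmt10Aux.quotHom (bCon A T) (thetaH A T 0) hrel)
    ⟨?_, ?_⟩, fun φ => rfl⟩
  · intro x y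
    refine Quotient.inductionOn₂' x y fun a b h => ?_
    refine Quotient.sound' ?_
    show ∀ σ : sgl A A ⟶ toK A T, σ ≫ a = σ ≫ b
    intro σ
    have hab : thetaH A T 0 a = thetaH A T 0 b := h
    have h0 : thetaH A T 0 (a - b) = 0 := by rw [RingHom.map_sub, hab, sub_self]
    have := (hker (a - b)).1 h0 σ
    rwa [Preadditive.comp_sub, sub_eq_zero] at this
  · intro y
    obtain ⟨φ, hφ⟩ := hsurj y
    exact ⟨(φ : (bCon A T).Quotient), hφ⟩
end

section
/- Let A be an Artin algebra and X a finitely generated right A-module which is faithful (ann_A(X) = 0) and Ext-projective in gen(X). Then there exist d ≥ 1 and an injective A-homomorphism f : A → X^(d) such that the induced map Hom_A(X^(d), N) → Hom_A(A, N), g ↦ g ∘ f, is surjective for every N in gen(X); in particular Ext¹_A(Coker f, N) = 0 for every N in gen(X), so Coker f is Ext-projective in gen(X). -/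
open CategoryTheory

section Helpers

lemma exists_generators (R : Type) [CommRing R]
    (A : Type) [Ring A] [Algebra R A] [Module.Finite R A]
    (X : Type) [AddCommGroup X] [Module A X] [Module.Finite A X] :
    ∃ (d : ℕ) (xs : Fin d → X), 1 ≤ d ∧
      ∀ x : X, ∃ c : Fin d → A,
        (∀ i, ∀ b : A, c i * b = b * c i) ∧ x = ∑ i, c i • xs i := by
  obtain ⟨m, y, hy⟩ := Module.Finite.exists_fin (R := A) (M := X)
  obtain ⟨n, b, hb⟩ := Module.Finite.exists_fin (R := R) (M := A)
  set e := finProdFinEquiv (m := m) (n := n)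
  refine ⟨m * n + 1, Fin.cons 0 (fun q => b (e.symm q).2 • y (e.symm q).1), Nat.le_add_left 1 _, ?_⟩
  intro x
  have hx : x ∈ Submodule.span A (Set.range y) := by rw [hy]; trivial
  rw [Submodule.mem_span_range_iff_exists_fun A] at hx
  obtain ⟨a, ha⟩ := hx
  have hrs : ∀ i : Fin m, ∃ r : Fin n → R, ∑ k, r k • b k = a i := by
    intro i
    have : a i ∈ Submodule.span R (Set.range b) := by rw [hb]; trivial
    rwa [Submodule.mem_span_range_iff_exists_fun R] at this
  choose r hr using hrs
  refine ⟨Fin.cons 0 (fun q => algebraMap R A (r (e.symm q).1 (e.symm q).2)), ?_, ?_⟩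
  · intro i bb
    refine Fin.cases ?_ ?_ i
    · simp
    · intro q; simp [Algebra.commutes]
  · rw [Fin.sum_univ_succ]
    simp only [Fin.cons_zero, Fin.cons_succ, zero_smul, zero_add]
    rw [Fintype.sum_equiv e.symm
      (fun q => (algebraMap R A) (r (e.symm q).1 (e.symm q).2) • (b (e.symm q).2 • y (e.symm q).1))
      (fun pr => (algebraMap R A) (r pr.1 pr.2) • (b pr.2 • y pr.1)) (fun pr => by simp),
      Fintype.sum_prod_type]
    have hinner : ∀ i : Fin m, ∑ k : Fin n, (algebraMap R A) (r i k) • (b k • y i) = a i • y i := by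
      intro i
      have : ∀ k : Fin n, (algebraMap R A) (r i k) • (b k • y i) = (r i k • b k) • y i := by
        intro k
        rw [Algebra.smul_def, mul_smul]
      simp only [this, ← Finset.sum_smul, hr]
    simp only [hinner, ha]


variable {A : Type} [Ring A]

lemma modCat_subsingleton_iff_isZero {S : Type} [Ring S] (M : ModuleCat S) :
    Subsingleton M ↔ Limits.IsZero M := by
  constructor
  · intro h; exact ModuleCat.isZero_of_subsingleton M
  · intro h
    refine ⟨fun a b => ?_⟩
    have := h.eq_of_src (𝟙 M) 0
    have ha : ∀ c : M, c = 0 := fun c =>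
      calc c = (𝟙 M) c := rfl
      _ = (0 : M ⟶ M) c := by rw [this]
      _ = 0 := rfl
    rw [ha a, ha b]


lemma ext1_subsingleton_iff (M N : Type) [AddCommGroup M] [Module A M]
    [AddCommGroup N] [Module A N] (P : ProjectiveResolution (ModuleCat.of A M)) :
    Subsingleton (ext1 A M N) ↔
      ∀ (φ : P.complex.X 1 ⟶ ModuleCat.of A N), P.complex.d 2 1 ≫ φ = 0 →
        ∃ ψ : P.complex.X 0 ⟶ ModuleCat.of A N, P.complex.d 1 0 ≫ ψ = φ := by
  set N' := ModuleCat.of A N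
  set K := P.complex.linearYonedaObj ℤ N' with hK
  have e := P.isoExt (R := ℤ) 1 N'
  have h1 : Subsingleton (ext1 A M N) ↔ Subsingleton (K.homology 1) :=
    Equiv.subsingleton_congr ((forget (ModuleCat ℤ)).mapIso e).toEquiv
  rw [h1, modCat_subsingleton_iff_isZero, ← HomologicalComplex.exactAt_iff_isZero_homology,
    K.exactAt_iff' 0 1 2 (by simp) (by simp), ShortComplex.moduleCat_exact_iff]
  have hd01 : ∀ (φ : P.complex.X 0 ⟶ N'), (K.d 0 1) φ = P.complex.d 1 0 ≫ φ := by
    intro φ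
    have h := ChainComplex.linearYonedaObj_d P.complex ℤ N' 0 1
    exact (ConcreteCategory.congr_hom h φ).trans (Linear.leftComp_apply _ _ _ _)
  have hd12 : ∀ (φ : P.complex.X 1 ⟶ N'), (K.d 1 2) φ = P.complex.d 2 1 ≫ φ := by
    intro φ
    have h := ChainComplex.linearYonedaObj_d P.complex ℤ N' 1 2
    exact (ConcreteCategory.congr_hom h φ).trans (Linear.leftComp_apply _ _ _ _)
  constructor
  · intro h φ hφ
    obtain ⟨ψ, hψ⟩ := h φ (show (K.d 1 2) φ = 0 from (hd12 φ).trans hφ)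
    exact ⟨ψ, ((hd01 ψ).symm.trans hψ : _)⟩
  · intro h φ hφ
    obtain ⟨ψ, hψ⟩ := h φ ((hd12 φ).symm.trans hφ)
    exact ⟨ψ, ((hd01 ψ).trans hψ : _)⟩

section Res
variable {M : Type} [AddCommGroup M] [Module A M]
  (P : ProjectiveResolution (ModuleCat.of A M))

/-- The augmentation `P₀ → M` as a linear map. -/
noncomputable def aug : ↥(P.complex.X 0) →ₗ[A] M :=
  ((HomologicalComplex.singleObjXSelf (ComplexShape.down ℕ) 0
    (ModuleCat.of A M)).hom.hom : _).comp ((P.π.f 0).hom : ↥(P.complex.X 0) →ₗ[A] _)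

lemma iso_hom_bijective {M N : ModuleCat A} (e : M ≅ N) : Function.Bijective e.hom := by
  constructor
  · intro a b h
    have : (e.hom ≫ e.inv) a = (e.hom ≫ e.inv) b := by
      change e.inv (e.hom a) = e.inv (e.hom b); rw [h]
    rwa [e.hom_inv_id] at this
  · intro y
    refine ⟨e.inv y, ?_⟩
    change (e.inv ≫ e.hom) y = y
    rw [e.inv_hom_id]; rfl

lemma aug_surjective : Function.Surjective (aug P) := by
  have h1 : Epi (P.π.f 0) := inferInstance
  have h2 := (ModuleCat.epi_iff_surjective (P.π.f 0)).1 h1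
  have h3 : Function.Surjective
      ((HomologicalComplex.singleObjXSelf (ComplexShape.down ℕ) 0 (ModuleCat.of A M)).hom) :=
    (iso_hom_bijective _).surjective
  exact h3.comp h2

lemma ker_aug : LinearMap.ker (aug P) = LinearMap.range ((P.complex.d 1 0).hom : _ →ₗ[A] _) := by
  have hinj : Function.Injective
      ((HomologicalComplex.singleObjXSelf (ComplexShape.down ℕ) 0 (ModuleCat.of A M)).hom) :=
    (iso_hom_bijective _).injective
  have hex := (ShortComplex.moduleCat_exact_iff_range_eq_ker _).1 P.exact₀
  ext x
  simp only [LinearMap.mem_ker, ← hex, LinearMap.mem_range]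
  constructor
  · intro h
    have : (P.π.f 0) x = 0 := by
      apply hinj
      rw [map_zero]; exact h
    rw [← LinearMap.mem_ker (f := ((P.π.f 0).hom : _ →ₗ[A] _)), ← hex] at this
    exact this
  · rintro ⟨y, rfl⟩
    have : (P.complex.d 1 0 ≫ P.π.f 0) y = 0 := by rw [P.complex_d_comp_π_f_zero]; rfl
    have h' : (P.π.f 0) ((P.complex.d 1 0) y) = 0 := this
    have h2 : aug P ((P.complex.d 1 0) y) =
        ((HomologicalComplex.singleObjXSelf (ComplexShape.down ℕ) 0
          (ModuleCat.of A M)).hom.hom) ((P.π.f 0) ((P.complex.d 1 0) y)) := rfl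
    rw [h2, h']
    exact map_zero _

lemma d_aug (x : ↥(P.complex.X 1)) : aug P ((P.complex.d 1 0) x) = 0 := by
  rw [← LinearMap.mem_ker, ker_aug]
  exact ⟨x, rfl⟩

end Res

lemma section_of_ext1 {M N Y : Type} [AddCommGroup M] [Module A M]
    [AddCommGroup N] [Module A N] [AddCommGroup Y] [Module A Y]
    (hs : Subsingleton (ext1 A M N))
    (g : Y →ₗ[A] M) (hg : Function.Surjective g)
    (j : N →ₗ[A] Y) (hj : Function.Injective j)
    (hker : LinearMap.range j = LinearMap.ker g) :
    ∃ σ : M →ₗ[A] Y, g ∘ₗ σ = LinearMap.id := by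
  obtain ⟨P⟩ := (HasProjectiveResolution.out (Z := ModuleCat.of A M))
  rw [ext1_subsingleton_iff M N P] at hs
  set π₀ := aug P with hπ₀
  have hπs := aug_surjective P
  -- lift π₀ through g
  have hepi : Epi (ModuleCat.ofHom g) := (ModuleCat.epi_iff_surjective _).2 hg
  have hπ₀cat : (P.complex.X 0 ⟶ ModuleCat.of A M) := ModuleCat.ofHom π₀
  let lam : P.complex.X 0 ⟶ ModuleCat.of A Y :=
    Projective.factorThru (P := P.complex.X 0) (X := ModuleCat.of A M) (ModuleCat.ofHom π₀ : P.complex.X 0 ⟶ ModuleCat.of A M) (ModuleCat.ofHom g)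
  let lamₗ : ↥(P.complex.X 0) →ₗ[A] Y := lam.hom
  have hlam : ∀ x, g (lamₗ x) = π₀ x := by
    intro x
    have h1 : lam ≫ ModuleCat.ofHom g = (ModuleCat.ofHom π₀ : P.complex.X 0 ⟶ ModuleCat.of A M) :=
      Projective.factorThru_comp (P := P.complex.X 0) (X := ModuleCat.of A M) (ModuleCat.ofHom π₀ : P.complex.X 0 ⟶ ModuleCat.of A M) (ModuleCat.ofHom g)
    exact congrFun (congrArg (fun (h : P.complex.X 0 ⟶ ModuleCat.of A M) => (h.hom : _ → _)) h1) x
  set d10 : ↥(P.complex.X 1) →ₗ[A] ↥(P.complex.X 0) := (P.complex.d 1 0).hom with hd10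
  have hland : ∀ x, lamₗ (d10 x) ∈ LinearMap.range j := by
    intro x
    rw [hker, LinearMap.mem_ker, hlam, hπ₀, d_aug]
  let e := LinearEquiv.ofInjective j hj
  let φ : ↥(P.complex.X 1) →ₗ[A] N :=
    e.symm.toLinearMap ∘ₗ LinearMap.codRestrict (LinearMap.range j)
      (lamₗ ∘ₗ d10) hland
  have hjφ : ∀ x, j (φ x) = lamₗ (d10 x) := by
    intro x
    have h1 : e (φ x) = ⟨lamₗ (d10 x), hland x⟩ := by
      simp [φ, LinearEquiv.apply_symm_apply]; rfl
    have := congrArg Subtype.val h1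
    rwa [LinearEquiv.ofInjective_apply] at this
  let φcat : P.complex.X 1 ⟶ ModuleCat.of A N := ModuleCat.ofHom φ
  have hdd : ∀ x, d10 ((P.complex.d 2 1) x) = (0 : ↥(P.complex.X 0)) := by
    intro x
    have h2 : (P.complex.d 2 1 ≫ P.complex.d 1 0) x = (0 : ↥(P.complex.X 0)) := by
      rw [P.complex.d_comp_d]; rfl
    exact h2
  have hφ2 : P.complex.d 2 1 ≫ φcat = 0 := by
    apply ModuleCat.hom_ext
    apply LinearMap.ext
    intro x
    apply hj
    show j (φ ((P.complex.d 2 1) x)) = j 0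
    rw [hjφ, map_zero, hdd, map_zero]
  obtain ⟨ψ, hψ⟩ := hs φcat hφ2
  let ψₗ : ↥(P.complex.X 0) →ₗ[A] N := ψ.hom
  have hψ' : ∀ x, ψₗ (d10 x) = φ x := fun x =>
    congrFun (congrArg (fun (h : P.complex.X 1 ⟶ ModuleCat.of A N) => (h.hom : _ → _)) hψ) x
  set θ : ↥(P.complex.X 0) →ₗ[A] Y := lamₗ - j ∘ₗ ψₗ with hθ
  have hθk : LinearMap.ker π₀ ≤ LinearMap.ker θ := by
    intro k hk
    rw [hπ₀, ker_aug] at hk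
    obtain ⟨x, rfl⟩ := hk
    simp only [LinearMap.mem_ker, hθ, LinearMap.sub_apply, LinearMap.comp_apply]
    show lamₗ (d10 x) - j (ψₗ (d10 x)) = 0
    rw [hψ' x, hjφ x, sub_self]
  let q := π₀.quotKerEquivOfSurjective hπs
  let σ : M →ₗ[A] Y := (Submodule.liftQ (LinearMap.ker π₀) θ hθk) ∘ₗ q.symm.toLinearMap
  refine ⟨σ, ?_⟩
  apply LinearMap.ext
  intro m
  obtain ⟨p, rfl⟩ := hπs m
  have hq : q.symm (π₀ p) = Submodule.Quotient.mk p := by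
    rw [LinearEquiv.symm_apply_eq]
    rfl
  show g (σ (π₀ p)) = π₀ p
  have hσ : σ (π₀ p) = θ p := by
    show (Submodule.liftQ (LinearMap.ker π₀) θ hθk) (q.symm (π₀ p)) = θ p
    rw [hq]
    rfl
  rw [hσ]
  have h3 : g (θ p) = g (lamₗ p) - g (j (ψₗ p)) := by
    simp [hθ]
  rw [h3, hlam]
  have hgj : g (j (ψₗ p)) = 0 := by
    have : j (ψₗ p) ∈ LinearMap.ker g := by rw [← hker]; exact ⟨ψₗ p, rfl⟩
    exact this
  rw [hgj, sub_zero]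

lemma ext1_subsingleton_of_extend {M N : Type} [AddCommGroup M] [Module A M]
    [AddCommGroup N] [Module A N]
    (hEP : ∀ (P₀ : ModuleCat.{0} A), Projective P₀ → ∀ (π₀ : ↥P₀ →ₗ[A] M),
      Function.Surjective π₀ →
      ∀ φbar : ↥(LinearMap.ker π₀) →ₗ[A] N, ∃ ψ : ↥P₀ →ₗ[A] N,
        ψ ∘ₗ (LinearMap.ker π₀).subtype = φbar) :
    Subsingleton (ext1 A M N) := by
  obtain ⟨P⟩ := (HasProjectiveResolution.out (Z := ModuleCat.of A M))
  rw [ext1_subsingleton_iff M N P]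
  intro φ hφ
  let φₗ : ↥(P.complex.X 1) →ₗ[A] N := φ.hom
  set π₀ := aug P with hπ₀
  have hπs := aug_surjective P
  set d10 : ↥(P.complex.X 1) →ₗ[A] ↥(P.complex.X 0) := (P.complex.d 1 0).hom with hd10
  set d21 : ↥(P.complex.X 2) →ₗ[A] ↥(P.complex.X 1) := (P.complex.d 2 1).hom with hd21
  -- exactness at degree 1
  have hex1 : ∀ x, d10 x = 0 → ∃ y, d21 y = x := by
    have h := P.complex_exactAt_succ 0
    rw [P.complex.exactAt_iff' 2 1 0 (by simp) (by simp)] at h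
    rw [ShortComplex.moduleCat_exact_iff] at h
    exact fun x hx => h x hx
  -- φ kills ker d10
  have hkill : LinearMap.ker d10 ≤ LinearMap.ker φₗ := by
    intro x hx
    obtain ⟨y, rfl⟩ := hex1 x hx
    have : φₗ (d21 y) = (P.complex.d 2 1 ≫ φ).hom y := rfl
    rw [LinearMap.mem_ker, this, hφ]
    rfl
  have hker : LinearMap.ker π₀ = LinearMap.range d10 := ker_aug P
  let e1 := d10.quotKerEquivRange
  let eqR : ↥(LinearMap.ker π₀) ≃ₗ[A] ↥(LinearMap.range d10) := LinearEquiv.ofEq _ _ hker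
  let φQ := Submodule.liftQ (LinearMap.ker d10) φₗ hkill
  let φbar : ↥(LinearMap.ker π₀) →ₗ[A] N :=
    φQ ∘ₗ e1.symm.toLinearMap ∘ₗ eqR.toLinearMap
  obtain ⟨ψ, hψ⟩ := hEP (P.complex.X 0) inferInstance π₀ hπs φbar
  let ψcat : P.complex.X 0 ⟶ ModuleCat.of A N := ModuleCat.ofHom ψ
  refine ⟨ψcat, ?_⟩
  apply ModuleCat.hom_ext
  apply LinearMap.ext
  intro x
  have hmem : d10 x ∈ LinearMap.ker π₀ := by rw [hker]; exact ⟨x, rfl⟩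
  have h1 : (P.complex.d 1 0 ≫ ψcat).hom x = ψ (d10 x) := rfl
  have h2 : ψ (d10 x) = φbar ⟨d10 x, hmem⟩ := by
    have h0 := congrFun (congrArg (fun (h : _ →ₗ[A] _) => (h : _ → _)) hψ) ⟨d10 x, hmem⟩
    have h0' : ψ ((LinearMap.ker π₀).subtype ⟨d10 x, hmem⟩) = φbar ⟨d10 x, hmem⟩ := h0
    exact h0'
  have h3 : eqR ⟨d10 x, hmem⟩ = ⟨d10 x, ⟨x, rfl⟩⟩ := rfl
  have h4 : e1.symm ⟨d10 x, ⟨x, rfl⟩⟩ = Submodule.Quotient.mk x := by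
    rw [LinearEquiv.symm_apply_eq]
    rfl
  have h5 : φbar ⟨d10 x, hmem⟩ = φQ (Submodule.Quotient.mk x) := by
    show φQ (e1.symm (eqR ⟨d10 x, hmem⟩)) = _
    rw [h3, h4]
  have h6 : φQ (Submodule.Quotient.mk x) = φₗ x := rfl
  show (P.complex.d 1 0 ≫ ψcat).hom x = φₗ x
  rw [h1, h2, h5, h6]

lemma pi_section {X N : Type} [AddCommGroup X] [Module A X] [AddCommGroup N] [Module A N] {d : ℕ}
    (hsplit : ∀ (Y : Type) [AddCommGroup Y] [Module A Y] (g : Y →ₗ[A] X),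
      Function.Surjective g → ∀ (j : N →ₗ[A] Y), Function.Injective j →
      LinearMap.range j = LinearMap.ker g →
      ∃ σ : X →ₗ[A] Y, g ∘ₗ σ = LinearMap.id)
    (Y : Type) [AddCommGroup Y] [Module A Y] (g : Y →ₗ[A] (Fin d → X))
    (hg : Function.Surjective g)
    (j : N →ₗ[A] Y) (hj : Function.Injective j)
    (hker : LinearMap.range j = LinearMap.ker g) :
    ∃ σ : (Fin d → X) →ₗ[A] Y, g ∘ₗ σ = LinearMap.id := by
  have key : ∀ l : Fin d, ∃ s : X →ₗ[A] Y, ∀ x, g (s x) = Pi.single l x := by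
    intro l
    set Φ : X × Y →ₗ[A] (Fin d → X) :=
      (g ∘ₗ LinearMap.snd A X Y) - ((LinearMap.single A (fun _ : Fin d => X) l) ∘ₗ
        LinearMap.fst A X Y) with hΦ
    set Z := LinearMap.ker Φ with hZ
    have hmemZ : ∀ z : X × Y, z ∈ Z ↔ g z.2 = Pi.single l z.1 := by
      intro z
      rw [hZ, LinearMap.mem_ker, hΦ, LinearMap.sub_apply, sub_eq_zero]
      rfl
    set gl : ↥Z →ₗ[A] X := (LinearMap.fst A X Y) ∘ₗ Z.subtype with hgl
    have hgls : Function.Surjective gl := by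
      intro x
      obtain ⟨y, hy⟩ := hg (Pi.single l x)
      exact ⟨⟨(x, y), (hmemZ (x, y)).2 hy⟩, rfl⟩
    have hjl0 : ∀ n, ((0 : X), j n) ∈ Z := by
      intro n
      rw [hmemZ]
      have : j n ∈ LinearMap.ker g := by rw [← hker]; exact ⟨n, rfl⟩
      show g (j n) = _
      rw [this, Pi.single_zero]
    set jl : N →ₗ[A] ↥Z :=
      LinearMap.codRestrict Z (LinearMap.prod 0 j) (fun n => hjl0 n) with hjl
    have hjli : Function.Injective jl := by
      intro n n' h
      apply hj
      have := congrArg (fun z : ↥Z => (z : X × Y).2) h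
      exact this
    have hkerl : LinearMap.range jl = LinearMap.ker gl := by
      ext z
      constructor
      · rintro ⟨n, rfl⟩
        show ((LinearMap.prod 0 j) n).1 = 0
        rfl
      · intro hz
        have h1 : (z : X × Y).1 = 0 := hz
        have h2 : g (z : X × Y).2 = Pi.single l (z : X × Y).1 := (hmemZ _).1 z.2
        rw [h1, Pi.single_zero] at h2
        have h3 : (z : X × Y).2 ∈ LinearMap.range j := by rw [hker]; exact h2
        obtain ⟨n, hn⟩ := h3
        refine ⟨n, ?_⟩
        apply Subtype.ext
        apply Prod.ext
        · show ((LinearMap.prod 0 j) n).1 = _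
          rw [h1]; rfl
        · exact hn
    obtain ⟨σl, hσl⟩ := hsplit ↥Z gl hgls jl hjli hkerl
    refine ⟨(LinearMap.snd A X Y) ∘ₗ Z.subtype ∘ₗ σl, ?_⟩
    intro x
    have h2 : g ((σl x : X × Y).2) = Pi.single l ((σl x : X × Y).1) := (hmemZ _).1 (σl x).2
    have h3 : (σl x : X × Y).1 = x := by
      have := congrFun (congrArg (fun (h : _ →ₗ[A] _) => (h : _ → _)) hσl) x
      exact this
    rw [h3] at h2
    exact h2
  choose s hs using key
  refine ⟨∑ l : Fin d, (s l) ∘ₗ (LinearMap.proj l), ?_⟩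
  apply LinearMap.ext
  intro v
  show g ((∑ l : Fin d, (s l) ∘ₗ (LinearMap.proj l)) v) = v
  rw [LinearMap.sum_apply, map_sum]
  have : ∀ l, g (((s l) ∘ₗ (LinearMap.proj l)) v) = Pi.single l (v l) := fun l => hs l (v l)
  simp only [this]
  exact Finset.univ_sum_single v

lemma EP_lemma {X N : Type} [AddCommGroup X] [Module A X] [AddCommGroup N] [Module A N]
    {d : ℕ} (f : A →ₗ[A] (Fin d → X))
    (happrox : ∀ h : A →ₗ[A] N, ∃ G : (Fin d → X) →ₗ[A] N, G ∘ₗ f = h)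
    (hsplitXd : ∀ (Y : Type) [AddCommGroup Y] [Module A Y] (g : Y →ₗ[A] (Fin d → X)),
      Function.Surjective g → ∀ (j : N →ₗ[A] Y), Function.Injective j →
      LinearMap.range j = LinearMap.ker g →
      ∃ σ : (Fin d → X) →ₗ[A] Y, g ∘ₗ σ = LinearMap.id)
    (P₀ : Type) [AddCommGroup P₀] [Module A P₀]
    (π₀ : P₀ →ₗ[A] ((Fin d → X) ⧸ LinearMap.range f)) (hπ : Function.Surjective π₀)
    (φbar : ↥(LinearMap.ker π₀) →ₗ[A] N) :
    ∃ ψ : P₀ →ₗ[A] N, ψ ∘ₗ (LinearMap.ker π₀).subtype = φbar := by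
  classical
  set C := (Fin d → X) ⧸ LinearMap.range f with hC
  set p : (Fin d → X) →ₗ[A] C := (LinearMap.range f).mkQ with hp
  have hps : Function.Surjective p := Submodule.mkQ_surjective _
  -- pushout of (LinearMap.ker π₀) ↪ P₀ along φbar
  set W : Submodule A (N × P₀) :=
    LinearMap.range (LinearMap.prod φbar (-((LinearMap.ker π₀).subtype))) with hW
  set Y := (N × P₀) ⧸ W with hY
  set jY : N →ₗ[A] Y := W.mkQ ∘ₗ LinearMap.inl A N P₀ with hjY
  set jP : P₀ →ₗ[A] Y := W.mkQ ∘ₗ LinearMap.inr A N P₀ with hjP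
  have hrel : ∀ k : ↥(LinearMap.ker π₀), jP (k : P₀) = jY (φbar k) := by
    intro k
    show W.mkQ (((0 : N), (k : P₀))) = W.mkQ ((φbar k, (0 : P₀)))
    rw [Submodule.mkQ_apply, Submodule.mkQ_apply, Submodule.Quotient.eq]
    refine ⟨-k, ?_⟩
    rw [LinearMap.prod_apply]
    apply Prod.ext
    · show φbar (-k) = (0 : N) - φbar k
      rw [map_neg, zero_sub]
    · show (-((LinearMap.ker π₀).subtype)) (-k) = (k : P₀) - 0
      rw [LinearMap.neg_apply, map_neg, neg_neg, sub_zero]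
      rfl
  have hjYi : Function.Injective jY := by
    intro n n' h
    have h1 : jY (n - n') = 0 := by rw [map_sub, h, sub_self]
    have h1' : W.mkQ ((n - n', (0 : P₀))) = 0 := h1
    rw [Submodule.mkQ_apply, Submodule.Quotient.mk_eq_zero] at h1'
    have h2 : ((n - n', (0 : P₀)) : N × P₀) ∈ W := h1'
    obtain ⟨k, hk⟩ := h2
    have hk2 : (-((LinearMap.ker π₀).subtype)) k = (0 : P₀) := congrArg Prod.snd hk
    have hk3 : k = 0 := by
      have : (k : P₀) = 0 := by
        rw [LinearMap.neg_apply] at hk2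
        have := neg_eq_zero.1 hk2
        exact this
      exact Subtype.ext this
    have hk1 : φbar k = n - n' := congrArg Prod.fst hk
    rw [hk3, map_zero] at hk1
    have := hk1.symm
    rwa [sub_eq_zero] at this
  -- the map Y → C
  have hWker : W ≤ LinearMap.ker (π₀ ∘ₗ LinearMap.snd A N P₀) := by
    rintro z ⟨k, rfl⟩
    show π₀ ((-((LinearMap.ker π₀).subtype)) k) = 0
    rw [LinearMap.neg_apply, map_neg]
    have : π₀ (k : P₀) = 0 := k.2
    rw [show ((LinearMap.ker π₀).subtype) k = (k : P₀) from rfl, this, neg_zero]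
  set gY : Y →ₗ[A] C := W.liftQ (π₀ ∘ₗ LinearMap.snd A N P₀) hWker with hgY
  have hgYmk : ∀ z : N × P₀, gY (W.mkQ z) = π₀ z.2 := fun z => rfl
  have hgYs : Function.Surjective gY := by
    intro c
    obtain ⟨u, rfl⟩ := hπ c
    exact ⟨W.mkQ (0, u), rfl⟩
  have hgYjY : ∀ n, gY (jY n) = 0 := by
    intro n
    show π₀ (0 : P₀) = 0
    rw [map_zero]
  have hrangeY : LinearMap.range jY = LinearMap.ker gY := by
    ext y2
    constructor
    · rintro ⟨n, rfl⟩
      exact hgYjY n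
    · intro hy
      obtain ⟨z, rfl⟩ := Submodule.mkQ_surjective W y2
      have hz : π₀ z.2 = 0 := hy
      have hz2 : z.2 ∈ (LinearMap.ker π₀) := hz
      refine ⟨z.1 + φbar ⟨z.2, hz2⟩, ?_⟩
      show W.mkQ ((z.1 + φbar ⟨z.2, hz2⟩, (0:P₀))) = W.mkQ z
      rw [Submodule.mkQ_apply, Submodule.mkQ_apply, Submodule.Quotient.eq]
      refine ⟨⟨z.2, hz2⟩, ?_⟩
      rw [LinearMap.prod_apply]
      apply Prod.ext
      · show φbar ⟨z.2, hz2⟩ = z.1 + φbar ⟨z.2, hz2⟩ - z.1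
        rw [add_sub_cancel_left]
      · show (-((LinearMap.ker π₀).subtype)) ⟨z.2, hz2⟩ = 0 - z.2
        rw [LinearMap.neg_apply, zero_sub]
        rfl
  -- pullback of gY along p
  set Φ : (Fin d → X) × Y →ₗ[A] C :=
    (gY ∘ₗ LinearMap.snd A _ Y) - (p ∘ₗ LinearMap.fst A _ Y) with hΦ
  set Z := LinearMap.ker Φ with hZ
  have hmemZ : ∀ z : (Fin d → X) × Y, z ∈ Z ↔ gY z.2 = p z.1 := by
    intro z
    rw [hZ, LinearMap.mem_ker, hΦ, LinearMap.sub_apply, sub_eq_zero]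
    rfl
  set rz : ↥Z →ₗ[A] (Fin d → X) := (LinearMap.fst A _ Y) ∘ₗ Z.subtype with hrz
  have hrzs : Function.Surjective rz := by
    intro v
    obtain ⟨y2, hy2⟩ := hgYs (p v)
    exact ⟨⟨(v, y2), (hmemZ (v, y2)).2 hy2⟩, rfl⟩
  have hjZ0 : ∀ n, (((0 : Fin d → X), jY n) : _ × Y) ∈ Z := by
    intro n
    rw [hmemZ]
    show gY (jY n) = p 0
    rw [hgYjY, map_zero]
  set jZ : N →ₗ[A] ↥Z :=
    LinearMap.codRestrict Z (LinearMap.prod 0 jY) (fun n => hjZ0 n) with hjZ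
  have hjZi : Function.Injective jZ := by
    intro n n' h
    apply hjYi
    exact congrArg (fun z : ↥Z => (z : (Fin d → X) × Y).2) h
  have hkerZ : LinearMap.range jZ = LinearMap.ker rz := by
    ext z
    constructor
    · rintro ⟨n, rfl⟩
      show ((LinearMap.prod 0 jY) n).1 = 0
      rfl
    · intro hz
      have h1 : (z : (Fin d → X) × Y).1 = 0 := hz
      have h2 : gY (z : (Fin d → X) × Y).2 = p (z : (Fin d → X) × Y).1 := (hmemZ _).1 z.2
      rw [h1, map_zero] at h2
      have h3 : (z : (Fin d → X) × Y).2 ∈ LinearMap.range jY := by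
        rw [hrangeY]; exact h2
      obtain ⟨n, hn⟩ := h3
      refine ⟨n, ?_⟩
      apply Subtype.ext
      apply Prod.ext
      · rw [h1]; rfl
      · exact hn
  obtain ⟨τ, hτ⟩ := hsplitXd ↥Z rz hrzs jZ hjZi hkerZ
  set t : (Fin d → X) →ₗ[A] Y := (LinearMap.snd A _ Y) ∘ₗ Z.subtype ∘ₗ τ with ht
  have hτ1 : ∀ v, (τ v : (Fin d → X) × Y).1 = v := by
    intro v
    exact congrFun (congrArg (fun (h : _ →ₗ[A] _) => (h : _ → _)) hτ) v
  have hgt : ∀ v, gY (t v) = p v := by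
    intro v
    have h2 : gY (τ v : (Fin d → X) × Y).2 = p (τ v : (Fin d → X) × Y).1 := (hmemZ _).1 (τ v).2
    rw [hτ1 v] at h2
    exact h2
  -- t ∘ f lands in range jY
  have htf : ∀ a : A, t (f a) ∈ LinearMap.range jY := by
    intro a
    rw [hrangeY, LinearMap.mem_ker, hgt]
    show (LinearMap.range f).mkQ (f a) = 0
    rw [Submodule.mkQ_apply, Submodule.Quotient.mk_eq_zero]
    exact ⟨a, rfl⟩
  set eY := LinearEquiv.ofInjective jY hjYi with heY
  set h : A →ₗ[A] N :=
    eY.symm.toLinearMap ∘ₗ LinearMap.codRestrict (LinearMap.range jY) (t ∘ₗ f) htf with hh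
  have hjYh : ∀ a, jY (h a) = t (f a) := by
    intro a
    have h1 : eY (h a) = ⟨t (f a), htf a⟩ := by
      simp [hh, LinearEquiv.apply_symm_apply]; rfl
    have h2 := congrArg Subtype.val h1
    rwa [LinearEquiv.ofInjective_apply] at h2
  obtain ⟨G, hG⟩ := happrox h
  have hGf : ∀ a, G (f a) = h a := fun a =>
    congrFun (congrArg (fun (h : _ →ₗ[A] _) => (h : _ → _)) hG) a
  set t' : (Fin d → X) →ₗ[A] Y := t - jY ∘ₗ G with ht'
  have ht'f : LinearMap.range f ≤ LinearMap.ker t' := by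
    rintro v ⟨a, rfl⟩
    show t (f a) - jY (G (f a)) = 0
    rw [hGf, hjYh, sub_self]
  set σ' : C →ₗ[A] Y := (LinearMap.range f).liftQ t' ht'f with hσ'
  have hgσ' : ∀ c : C, gY (σ' c) = c := by
    intro c
    obtain ⟨v, rfl⟩ := hps c
    have h1 : σ' (p v) = t' v := rfl
    rw [h1]
    show gY (t v - jY (G v)) = p v
    rw [map_sub, hgt, hgYjY, sub_zero]
  -- retraction of jY
  have hret : ∀ y2 : Y, y2 - σ' (gY y2) ∈ LinearMap.range jY := by
    intro y2
    rw [hrangeY, LinearMap.mem_ker, map_sub, hgσ', sub_self]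
  set ρ : Y →ₗ[A] N :=
    eY.symm.toLinearMap ∘ₗ LinearMap.codRestrict (LinearMap.range jY)
      (LinearMap.id - σ' ∘ₗ gY) hret with hρ
  have hρjY : ∀ n, ρ (jY n) = n := by
    intro n
    have h0 : jY n - σ' (gY (jY n)) = jY n := by
      rw [hgYjY, map_zero, sub_zero]
    have h1 : (LinearMap.codRestrict (LinearMap.range jY)
        (LinearMap.id - σ' ∘ₗ gY) hret) (jY n) = ⟨jY n, ⟨n, rfl⟩⟩ := by
      apply Subtype.ext
      exact h0
    show eY.symm ((LinearMap.codRestrict (LinearMap.range jY)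
        (LinearMap.id - σ' ∘ₗ gY) hret) (jY n)) = n
    rw [h1]
    have h2 : eY n = ⟨jY n, ⟨n, rfl⟩⟩ := by
      apply Subtype.ext
      rw [LinearEquiv.ofInjective_apply]
    rw [← h2, LinearEquiv.symm_apply_apply]
  refine ⟨ρ ∘ₗ jP, ?_⟩
  apply LinearMap.ext
  intro k
  show ρ (jP (((LinearMap.ker π₀).subtype) k)) = φbar k
  rw [show ((LinearMap.ker π₀).subtype) k = (k : P₀) from rfl, hrel, hρjY]

end Helpers

/-- If `X` is a faithful finitely generated module over an Artin algebra
`A` which is Ext-projective in `gen(X)`, then there is an embedding `f : A → X^d` such that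
`Hom(X^d, N) → Hom(A, N)` is onto for all `N ∈ gen(X)`; in particular `Coker f` is
Ext-projective in `gen(X)`. -/
theorem stmt17
    (R : Type) [CommRing R] [IsArtinianRing R] [IsLocalRing R]
    (A : Type) [Ring A] [Algebra R A] [Module.Finite R A]
    (X : Type) [AddCommGroup X] [Module A X] [Module.Finite A X]
    (hfaith : ∀ a : A, (∀ x : X, a • x = 0) → a = 0)
    (hX : ∀ (N : Type) [AddCommGroup N] [Module A N], IsGenBy A X N →
      Subsingleton (ext1 A X N)) :
    ∃ (d : ℕ) (f : A →ₗ[A] (Fin d → X)),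
      1 ≤ d ∧ Function.Injective f ∧
      (∀ (N : Type) [AddCommGroup N] [Module A N], IsGenBy A X N →
        Function.Surjective (fun g : (Fin d → X) →ₗ[A] N => g ∘ₗ f)) ∧
      (∀ (N : Type) [AddCommGroup N] [Module A N], IsGenBy A X N →
        Subsingleton (ext1 A ((Fin d → X) ⧸ LinearMap.range f) N)) := by
  obtain ⟨d, xs, hd, hgen⟩ := exists_generators R A X
  let f : A →ₗ[A] (Fin d → X) :=
    { toFun := fun a => fun i => a • xs i
      map_add' := by intro a b; funext i; exact add_smul a b (xs i)
      map_smul' := by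
        intro c a; funext i
        show (c • a) • xs i = c • (a • xs i)
        rw [smul_eq_mul, mul_smul] }
  have hfa : ∀ (a : A) (i : Fin d), f a i = a • xs i := fun a i => rfl
  -- commuting computation
  have hcomm : ∀ (c : Fin d → A), (∀ i, ∀ b : A, c i * b = b * c i) →
      ∀ (a : A) (i : Fin d) (z : X), c i • (a • z) = a • (c i • z) := by
    intro c hc a i z
    rw [← mul_smul, hc i a, mul_smul]
  -- injectivity
  have hker : ∀ a : A, f a = 0 → a = 0 := by
    intro a ha
    apply hfaith
    intro x
    obtain ⟨c, hc, rfl⟩ := hgen x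
    rw [Finset.smul_sum]
    refine Finset.sum_eq_zero fun i _ => ?_
    have h1 : a • (c i • xs i) = c i • (a • xs i) := (hcomm c hc a i (xs i)).symm
    have h2 : a • xs i = 0 := congrFun ha i
    rw [h1, h2, smul_zero]
  have hinj : Function.Injective f := by
    intro a b hab
    have : f (a - b) = 0 := by rw [map_sub, hab, sub_self]
    have := hker _ this
    rwa [sub_eq_zero] at this
  -- approximation property
  have happroxX : ∀ h : A →ₗ[A] X, ∃ g : (Fin d → X) →ₗ[A] X, g ∘ₗ f = h := by
    intro h
    obtain ⟨c, hc, hrep⟩ := hgen (h 1)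
    refine ⟨{ toFun := fun v => ∑ i, c i • v i
              map_add' := by
                intro v w
                simp only [Pi.add_apply, smul_add]
                rw [Finset.sum_add_distrib]
              map_smul' := by
                intro a v
                show ∑ i, c i • (a • v i) = a • ∑ i, c i • v i
                rw [Finset.smul_sum]
                exact Finset.sum_congr rfl fun i _ => hcomm c hc a i (v i) }, ?_⟩
    apply LinearMap.ext
    intro a
    show ∑ i, c i • (a • xs i) = h a
    have h1 : ∀ i ∈ Finset.univ, c i • (a • xs i) = a • (c i • xs i) :=
      fun i _ => hcomm c hc a i (xs i)
    rw [Finset.sum_congr rfl h1, ← Finset.smul_sum, ← hrep]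
    have h2 : a • (1 : A) = a := by rw [smul_eq_mul, mul_one]
    rw [← h2, map_smul, h2]
  -- surjectivity of Hom(X^d, N) → Hom(A, N) for N ∈ gen(X)
  have hsurjHom : ∀ (N : Type) [AddCommGroup N] [Module A N], IsGenBy A X N →
      ∀ h : A →ₗ[A] N, ∃ G : (Fin d → X) →ₗ[A] N, G ∘ₗ f = h := by
    intro N _ _ hN h
    obtain ⟨n', p, hp⟩ := hN
    obtain ⟨y0, hy0⟩ := hp (h 1)
    let h' : A →ₗ[A] (Fin n' → X) :=
      { toFun := fun a => a • y0
        map_add' := fun a b => add_smul a b y0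
        map_smul' := fun c a => mul_smul c a y0 }
    have hph' : ∀ a, p (h' a) = h a := by
      intro a
      show p (a • y0) = h a
      rw [map_smul, hy0]
      have h2 : a • (1 : A) = a := by rw [smul_eq_mul, mul_one]
      rw [← h2, map_smul, h2]
    have hcomp : ∀ l : Fin n', ∃ g : (Fin d → X) →ₗ[A] X,
        g ∘ₗ f = (LinearMap.proj l) ∘ₗ h' := fun l => happroxX _
    choose gs hgs using hcomp
    refine ⟨p ∘ₗ LinearMap.pi gs, ?_⟩
    apply LinearMap.ext
    intro a
    show p (fun l => gs l (f a)) = h a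
    have h3 : (fun l => gs l (f a)) = h' a := by
      funext l
      exact congrFun (congrArg (fun (h : _ →ₗ[A] _) => (h : _ → _)) (hgs l)) a
    rw [h3, hph']
  refine ⟨d, f, hd, hinj, ?_, ?_⟩
  · intro N _ _ hN h
    obtain ⟨G, hG⟩ := hsurjHom N hN h
    exact ⟨G, hG⟩
  · intro N _ _ hN
    apply ext1_subsingleton_of_extend
    intro P₀ hProj π₀ hπs φbar
    have hsplitX : ∀ (Y : Type) [AddCommGroup Y] [Module A Y] (g : Y →ₗ[A] X),
        Function.Surjective g → ∀ (j : N →ₗ[A] Y), Function.Injective j →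
        LinearMap.range j = LinearMap.ker g →
        ∃ σ : X →ₗ[A] Y, g ∘ₗ σ = LinearMap.id := by
      intro Y _ _ g hg j hj hk
      exact section_of_ext1 (hX N hN) g hg j hj hk
    exact EP_lemma f (hsurjHom N hN) (pi_section hsplitX) ↥P₀ π₀ hπs φbar
end
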